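/- arXiv:2005.05792 — 4 statements merged into one kernel-verified Lean document; each statement's English description precedes it below -/
import Mathlib

section
/- An oriented hypergraph G^σ is incidence balanced (i.e., there is a bipartition {X,Y} of its vertex set such that every edge meets X exactly in its positively incident vertices and Y exactly in its negatively incident vertices, or vice versa edge by edge consistently after switching) if and only if every cycle of G^σ has positive incidence sign, i.e., the product of σ over all incidences in the cycle equals +1. -/
open Matrix BigOperators

variable {V E : Type*}

/-- `M` is the signed edge-vertex incidence matrix of an incidence orientation of the
hypergraph whose incidence relation is `mem` (`mem e v` means `v ∈ e`). -/
def IsOrientation (mem : E → V → Prop) (M : Matrix E V ℝ) : Prop :=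
  ∀ e v, (mem e v → M e v = 1 ∨ M e v = -1) ∧ (¬ mem e v → M e v = 0)

/-- The incidence matrix of the all-positive orientation `G⁺`. -/
def Mplus (mem : E → V → Prop) [∀ e v, Decidable (mem e v)] : Matrix E V ℝ :=
  Matrix.of fun e v => if mem e v then 1 else 0

/-- Vertex switching at `w`: negate all incidence signs at the vertex `w`. -/
def vertexSwitch [DecidableEq V] (M : Matrix E V ℝ) (w : V) : Matrix E V ℝ :=
  Matrix.of fun e v => if v = w then -M e v else M e v

/-- Edge switching at `f`: negate all incidence signs of the edge `f`. -/
def edgeSwitch [DecidableEq E] (M : Matrix E V ℝ) (f : E) : Matrix E V ℝ :=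
  Matrix.of fun e v => if e = f then -M e v else M e v

/-- One switching step: a single vertex switching or a single edge switching. -/
def SwitchStep [DecidableEq V] [DecidableEq E] (M N : Matrix E V ℝ) : Prop :=
  (∃ w, N = vertexSwitch M w) ∨ (∃ f, N = edgeSwitch M f)

/-- Switching equivalence: a finite sequence of vertex and/or edge switchings. -/
def SwitchEquiv [DecidableEq V] [DecidableEq E] : Matrix E V ℝ → Matrix E V ℝ → Prop :=
  Relation.ReflTransGen SwitchStep

/-- Incidence balance: there is a bipartition `{X, Xᶜ}` of the vertices such that every edge
intersects one part exactly in its positively incident vertices and the other part exactly in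
its negatively incident vertices (the roles of the parts may vary edge by edge). -/
def IncBalanced (mem : E → V → Prop) (M : Matrix E V ℝ) : Prop :=
  ∃ X : V → Prop, ∀ e,
    (∀ v, mem e v → (M e v = 1 ↔ X v)) ∨ (∀ v, mem e v → (M e v = 1 ↔ ¬ X v))

/-- The adjacency matrix of an oriented hypergraph:
`a u v = ∑_{e ∋ u,v} σ(e,u)σ(e,v)` for `u ≠ v` and `0` on the diagonal. -/
def adjMat [Fintype E] [DecidableEq V] (M : Matrix E V ℝ) : Matrix V V ℝ :=
  Matrix.of fun u v => if u = v then 0 else ∑ e, M e u * M e v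

/-- The diagonal matrix of vertex degrees. -/
def degMat [Fintype E] [DecidableEq V] (mem : E → V → Prop) [∀ e v, Decidable (mem e v)] :
    Matrix V V ℝ :=
  Matrix.diagonal fun v => ((Finset.univ.filter fun e => mem e v).card : ℝ)

/-- `μ` is a (real) eigenvalue of the real matrix `A`. -/
def IsEigenvalue {n : Type*} [Fintype n] (A : Matrix n n ℝ) (μ : ℝ) : Prop :=
  ∃ x : n → ℝ, x ≠ 0 ∧ A.mulVec x = μ • x

/-- `μ` is a complex eigenvalue of the real matrix `A`. -/
def IsEigenvalueC {n : Type*} [Fintype n] (A : Matrix n n ℝ) (μ : ℂ) : Prop :=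
  ∃ x : n → ℂ, x ≠ 0 ∧ (A.map fun a => (a : ℂ)).mulVec x = μ • x

/-- Spectral radius: the maximum modulus of the (complex) eigenvalues of `A`. -/
noncomputable def specRad {n : Type*} [Fintype n] (A : Matrix n n ℝ) : ℝ :=
  sSup {r | ∃ μ : ℂ, IsEigenvalueC A μ ∧ r = ‖μ‖}

/-- `s` is a singular value of `M`, i.e. a square root of an eigenvalue of `Mᵀ M`. -/
def IsSingularValue [Fintype V] [Fintype E] (M : Matrix E V ℝ) (s : ℝ) : Prop :=
  0 ≤ s ∧ IsEigenvalue (Mᵀ * M) (s ^ 2)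

/-- The maximum singular value of `M`. -/
noncomputable def maxSingularValue [Fintype V] [Fintype E] (M : Matrix E V ℝ) : ℝ :=
  sSup {s | IsSingularValue M s}

/-- The (bipartite) incidence graph of a hypergraph, on vertex set `V ⊕ E`, with an edge
joining `v` and `e` for each incidence `(e, v)`. -/
def incGraph (mem : E → V → Prop) : SimpleGraph (V ⊕ E) where
  Adj x y := (∃ v e, x = Sum.inl v ∧ y = Sum.inr e ∧ mem e v) ∨
             (∃ v e, x = Sum.inr e ∧ y = Sum.inl v ∧ mem e v)
  symm := by
    constructor
    rintro x y (⟨v, e, h1, h2, h3⟩ | ⟨v, e, h1, h2, h3⟩)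
    · exact Or.inr ⟨v, e, h2, h1, h3⟩
    · exact Or.inl ⟨v, e, h2, h1, h3⟩
  loopless := by
    constructor
    rintro x (⟨v, e, h1, h2, h3⟩ | ⟨v, e, h1, h2, h3⟩) <;> subst h1 <;> simp at h2

/-- A hypergraph is connected if any two elements of `V ∪ E` are joined by a walk,
i.e. its incidence graph is connected. -/
def HConnected (mem : E → V → Prop) : Prop := (incGraph mem).Connected

/-- The sign of an incidence, viewed as an edge of the incidence graph. -/
def pairSign (M : Matrix E V ℝ) : V ⊕ E → V ⊕ E → ℝ
  | Sum.inl v, Sum.inr e => M e v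
  | Sum.inr e, Sum.inl v => M e v
  | _, _ => 1

/-- The incidence sign of a walk (in particular of a path or a cycle) of the oriented
hypergraph, realized as a walk of the incidence graph: the product of the signs of the
incidences traversed. -/
def walkSign {mem : E → V → Prop} (M : Matrix E V ℝ) {x y : V ⊕ E}
    (w : (incGraph mem).Walk x y) : ℝ :=
  (w.darts.map fun d => pairSign M d.toProd.1 d.toProd.2).prod

section Aux

variable {mem : E → V → Prop} {M : Matrix E V ℝ}

lemma pairSign_symm (M : Matrix E V ℝ) (a b : V ⊕ E) : pairSign M a b = pairSign M b a := by
  cases a <;> cases b <;> rfl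

lemma pairSign_sq (hM : IsOrientation mem M) {a b : V ⊕ E} (h : (incGraph mem).Adj a b) :
    pairSign M a b * pairSign M a b = 1 := by
  rcases h with ⟨v, e, rfl, rfl, hm⟩ | ⟨v, e, rfl, rfl, hm⟩ <;>
    rcases (hM e v).1 hm with h1 | h1 <;> simp [pairSign, h1]

@[simp] lemma walkSign_nil {x : V ⊕ E} :
    walkSign M (SimpleGraph.Walk.nil : (incGraph mem).Walk x x) = 1 := rfl

@[simp] lemma walkSign_cons {x y z : V ⊕ E} (h : (incGraph mem).Adj x y)
    (p : (incGraph mem).Walk y z) :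
    walkSign M (SimpleGraph.Walk.cons h p) = pairSign M x y * walkSign M p := by
  simp [walkSign, SimpleGraph.Walk.darts_cons]

lemma walkSign_append {x y z : V ⊕ E} (p : (incGraph mem).Walk x y)
    (q : (incGraph mem).Walk y z) :
    walkSign M (p.append q) = walkSign M p * walkSign M q := by
  simp [walkSign, SimpleGraph.Walk.darts_append]

lemma walkSign_reverse {x y : V ⊕ E} (p : (incGraph mem).Walk x y) :
    walkSign M p.reverse = walkSign M p := by
  unfold walkSign
  rw [SimpleGraph.Walk.darts_reverse, List.map_reverse, List.prod_reverse, List.map_map]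
  congr 1
  apply List.map_congr_left
  intro d _
  simp only [Function.comp_apply, SimpleGraph.Dart.symm_toProd, Prod.fst_swap, Prod.snd_swap]
  exact pairSign_symm M _ _

lemma walkSign_copy {x y x' y' : V ⊕ E} (p : (incGraph mem).Walk x y)
    (hx : x = x') (hy : y = y') : walkSign M (p.copy hx hy) = walkSign M p := by
  subst hx; subst hy; rfl

lemma walkSign_tele (g : V ⊕ E → ℝ)
    (h1 : ∀ a b, (incGraph mem).Adj a b → pairSign M a b = g a * g b)
    (h2 : ∀ a, g a * g a = 1) :
    ∀ {a b : V ⊕ E} (w : (incGraph mem).Walk a b), walkSign M w = g a * g b := by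
  intro a b w
  induction w with
  | nil => rw [walkSign_nil]; exact (h2 _).symm
  | @cons a c b h p ih =>
    rw [walkSign_cons, ih, h1 _ _ h]
    linear_combination g a * g b * h2 c

/-- A path from `y` to `x` containing the edge `s(x,y)` must be a single edge. -/
lemma path_edge_end {x y : V ⊕ E} (p : (incGraph mem).Walk y x) (hp : p.IsPath)
    (he : s(x, y) ∈ p.edges) :
    ∃ (h' : (incGraph mem).Adj y x), p = SimpleGraph.Walk.cons h' SimpleGraph.Walk.nil := by
  cases p with
  | nil => simp at he
  | @cons _ z _ h' q =>
    rw [SimpleGraph.Walk.edges_cons, List.mem_cons] at he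
    rw [SimpleGraph.Walk.cons_isPath_iff] at hp
    rcases he with he | he
    · rw [Sym2.eq_iff] at he
      rcases he with ⟨rfl, rfl⟩ | ⟨rfl, -⟩
      · exact absurd rfl h'.ne
      · -- z = x, q : Walk x x is a path hence nil
        have hq : q = SimpleGraph.Walk.nil := by
          cases q with
          | nil => rfl
          | cons h'' r =>
            exfalso
            rw [SimpleGraph.Walk.cons_isPath_iff] at hp
            exact hp.1.2 (SimpleGraph.Walk.end_mem_support r)
        subst hq
        exact ⟨h', rfl⟩
    · exact absurd (SimpleGraph.Walk.snd_mem_support_of_mem_edges q he) hp.2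

/-- If every cycle has sign `1`, then every closed walk has sign `1`. -/
lemma walkSign_closed (hM : IsOrientation mem M)
    (hcyc : ∀ (x : V ⊕ E) (w : (incGraph mem).Walk x x), w.IsCycle → walkSign M w = 1) :
    ∀ (n : ℕ) (x : V ⊕ E) (w : (incGraph mem).Walk x x), w.length ≤ n → walkSign M w = 1 := by
  letI : DecidableEq (V ⊕ E) := Classical.decEq _
  intro n
  induction n with
  | zero =>
    intro x w hw
    cases w with
    | nil => rfl
    | cons h p => simp [SimpleGraph.Walk.length_cons] at hw
  | succ n ih =>
    intro x w hw
    cases w with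
    | nil => rfl
    | @cons _ y _ h p =>
      by_cases hnd : p.support.Nodup
      · by_cases he : s(x, y) ∈ p.edges
        · -- backtracking: p is a single edge
          obtain ⟨h', rfl⟩ := path_edge_end p ((SimpleGraph.Walk.isPath_def p).mpr hnd) he
          rw [walkSign_cons, walkSign_cons, walkSign_nil, mul_one,
            pairSign_symm M y x]
          exact pairSign_sq hM h
        · -- we have a genuine cycle
          exact hcyc x _ ((SimpleGraph.Walk.cons_isCycle_iff p h).mpr
            ⟨(SimpleGraph.Walk.isPath_def p).mpr hnd, he⟩)
      · -- p has a repeated vertex u; split off a shorter closed walk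
        rw [List.nodup_iff_count_le_one] at hnd
        push_neg at hnd
        obtain ⟨u, hu⟩ := hnd
        have hu2 : 2 ≤ p.support.count u := hu
        have hmem : u ∈ p.support := List.count_pos_iff.mp (by omega)
        have hspec := p.take_spec hmem
        have hc1 := p.count_support_takeUntil_eq_one hmem
        have hsupp : p.support = (p.takeUntil u hmem).support
            ++ (p.dropUntil u hmem).support.tail := by
          conv_lhs => rw [← hspec]
          exact SimpleGraph.Walk.support_append _ _
        rw [hsupp, List.count_append, hc1] at hu2
        have hmem2 : u ∈ (p.dropUntil u hmem).support.tail := by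
          rw [← List.count_pos_iff]; omega
        have hnn : ¬ (p.dropUntil u hmem).Nil := by
          intro hnil
          rw [SimpleGraph.Walk.nil_iff_length_eq] at hnil
          have := SimpleGraph.Walk.length_support (p.dropUntil u hmem)
          have h0 : (p.dropUntil u hmem).support.tail.length = 0 := by
            have : (p.dropUntil u hmem).support.tail.length =
                (p.dropUntil u hmem).support.length - 1 := List.length_tail
            omega
          rw [List.length_eq_zero_iff] at h0
          rw [h0] at hmem2
          simp at hmem2
        rw [SimpleGraph.Walk.not_nil_iff] at hnn
        obtain ⟨z, h'', d', hd⟩ := hnn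
        rw [hd] at hspec hmem2
        rw [SimpleGraph.Walk.support_cons, List.tail_cons] at hmem2
        have hspec2 := d'.take_spec hmem2
        -- the two shorter closed walks
        have ihc : walkSign M (SimpleGraph.Walk.cons h'' (d'.takeUntil u hmem2)) = 1 := by
          apply ih u
          have hl := congrArg SimpleGraph.Walk.length hspec
          have hl2 := congrArg SimpleGraph.Walk.length hspec2
          rw [SimpleGraph.Walk.length_append, SimpleGraph.Walk.length_cons] at hl
          rw [SimpleGraph.Walk.length_append] at hl2
          rw [SimpleGraph.Walk.length_cons]
          rw [SimpleGraph.Walk.length_cons] at hw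
          omega
        have ihw2 : walkSign M (SimpleGraph.Walk.cons h
            ((p.takeUntil u hmem).append (d'.dropUntil u hmem2))) = 1 := by
          apply ih x
          have hl := congrArg SimpleGraph.Walk.length hspec
          have hl2 := congrArg SimpleGraph.Walk.length hspec2
          rw [SimpleGraph.Walk.length_append, SimpleGraph.Walk.length_cons] at hl
          rw [SimpleGraph.Walk.length_append] at hl2
          rw [SimpleGraph.Walk.length_cons, SimpleGraph.Walk.length_append]
          rw [SimpleGraph.Walk.length_cons] at hw
          omega
        have e1 := congrArg (fun q : (incGraph mem).Walk y x => walkSign M q) hspec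
        simp only [walkSign_append, walkSign_cons] at e1
        have e2 := congrArg (fun q : (incGraph mem).Walk z x => walkSign M q) hspec2
        simp only [walkSign_append] at e2
        rw [walkSign_cons, ← e1, ← e2]
        rw [walkSign_cons, walkSign_append] at ihw2
        rw [walkSign_cons] at ihc
        linear_combination (pairSign M x y * (walkSign M (p.takeUntil u hmem) *
            walkSign M (d'.dropUntil u hmem2))) * ihc + ihw2
end Aux

/-- `G^σ` is incidence balanced iff every cycle has positive incidence sign. -/
theorem incBalanced_iff_cycles_positive
    (mem : E → V → Prop) (M : Matrix E V ℝ) (hM : IsOrientation mem M) :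
    IncBalanced mem M ↔
      ∀ (x : V ⊕ E) (w : (incGraph mem).Walk x x), w.IsCycle → walkSign M w = 1 := by
  classical
  constructor
  · rintro ⟨X, hX⟩ x w _
    let g : V ⊕ E → ℝ := fun a =>
      Sum.rec (fun v => if X v then (1 : ℝ) else -1)
        (fun e => if (∀ v, mem e v → (M e v = 1 ↔ X v)) then (1 : ℝ) else -1) a
    have hgv : ∀ v, g (Sum.inl v) = if X v then (1 : ℝ) else -1 := fun _ => rfl
    have hge : ∀ e, g (Sum.inr e) =
        if (∀ v, mem e v → (M e v = 1 ↔ X v)) then (1 : ℝ) else -1 := fun _ => rfl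
    have hg2 : ∀ a, g a * g a = 1 := by
      rintro (v | e)
      · rw [hgv]; split_ifs <;> norm_num
      · rw [hge]; split_ifs <;> norm_num
    have hkey : ∀ a b, (incGraph mem).Adj a b → pairSign M a b = g a * g b := by
      have main : ∀ v e, mem e v →
          pairSign M (Sum.inl v) (Sum.inr e) = g (Sum.inl v) * g (Sum.inr e) := by
        intro v e hv
        show M e v = g (Sum.inl v) * g (Sum.inr e)
        rw [hgv, hge]
        by_cases hc : (∀ v, mem e v → (M e v = 1 ↔ X v))
        · rw [if_pos hc]
          by_cases hXv : X v
          · rw [if_pos hXv, (hc v hv).mpr hXv]; norm_num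
          · rw [if_neg hXv]
            have hne : M e v ≠ 1 := fun h1 => hXv ((hc v hv).mp h1)
            rcases (hM e v).1 hv with hm | hm
            · exact absurd hm hne
            · rw [hm]; norm_num
        · rw [if_neg hc]
          have hB : ∀ v, mem e v → (M e v = 1 ↔ ¬ X v) := (hX e).resolve_left hc
          by_cases hXv : X v
          · rw [if_pos hXv]
            have hne : M e v ≠ 1 := fun h1 => ((hB v hv).mp h1) hXv
            rcases (hM e v).1 hv with hm | hm
            · exact absurd hm hne
            · rw [hm]; norm_num
          · rw [if_neg hXv, (hB v hv).mpr hXv]; norm_num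
      rintro a b (⟨v, e, rfl, rfl, hv⟩ | ⟨v, e, rfl, rfl, hv⟩)
      · exact main v e hv
      · rw [pairSign_symm, mul_comm]; exact main v e hv
    rw [walkSign_tele g hkey hg2 w]
    exact hg2 x
  · intro hcyc
    have hclosed : ∀ (x : V ⊕ E) (w : (incGraph mem).Walk x x), walkSign M w = 1 :=
      fun x w => walkSign_closed hM hcyc w.length x w le_rfl
    have hsame : ∀ {a b : V ⊕ E} (p q : (incGraph mem).Walk a b),
        walkSign M p = walkSign M q := by
      intro a b p q
      have h1 := hclosed a (p.append q.reverse)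
      rw [walkSign_append, walkSign_reverse] at h1
      have h2 := hclosed a (q.append q.reverse)
      rw [walkSign_append, walkSign_reverse] at h2
      calc walkSign M p = walkSign M p * (walkSign M q * walkSign M q) := by
            rw [h2, mul_one]
        _ = (walkSign M p * walkSign M q) * walkSign M q := by ring
        _ = walkSign M q := by rw [h1, one_mul]
    set r : V ⊕ E → V ⊕ E := fun a => ((incGraph mem).connectedComponentMk a).out with hr
    have hra : ∀ a, (incGraph mem).Reachable (r a) a := by
      intro a
      have := Quot.out_eq ((incGraph mem).connectedComponentMk a)
      exact (SimpleGraph.ConnectedComponent.eq).mp this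
    set f : V ⊕ E → ℝ := fun a => walkSign M (hra a).some with hf
    have hf2 : ∀ a, f a * f a = 1 := by
      intro a
      have := hclosed (r a) ((hra a).some.append (hra a).some.reverse)
      rw [walkSign_append, walkSign_reverse] at this
      exact this
    have hstep : ∀ a b, (incGraph mem).Adj a b → f b = f a * pairSign M a b := by
      intro a b hadj
      have hcomp : r a = r b :=
        congrArg Quot.out (SimpleGraph.ConnectedComponent.sound hadj.reachable)
      have := hsame (hra b).some
        (((hra a).some.append (SimpleGraph.Walk.cons hadj SimpleGraph.Walk.nil)).copy hcomp rfl)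
      rw [walkSign_copy, walkSign_append, walkSign_cons, walkSign_nil, mul_one] at this
      exact this
    refine ⟨fun v => f (Sum.inl v) = 1, fun e => ?_⟩
    have hfe := (mul_self_eq_one_iff).mp (hf2 (Sum.inr e))
    rcases hfe with h1 | h1
    · left
      intro v hv
      have hadj : (incGraph mem).Adj (Sum.inl v) (Sum.inr e) := Or.inl ⟨v, e, rfl, rfl, hv⟩
      have heq := hstep (Sum.inl v) (Sum.inr e) hadj
      have hpe : pairSign M (Sum.inl v) (Sum.inr e) = M e v := rfl
      rw [hpe, h1] at heq
      show M e v = 1 ↔ f (Sum.inl v) = 1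
      rcases (hM e v).1 hv with hm | hm <;>
        rcases (mul_self_eq_one_iff).mp (hf2 (Sum.inl v)) with hfv | hfv <;>
        rw [hm, hfv] at heq ⊢ <;> norm_num at heq <;> norm_num
    · right
      intro v hv
      have hadj : (incGraph mem).Adj (Sum.inl v) (Sum.inr e) := Or.inl ⟨v, e, rfl, rfl, hv⟩
      have heq := hstep (Sum.inl v) (Sum.inr e) hadj
      have hpe : pairSign M (Sum.inl v) (Sum.inr e) = M e v := rfl
      rw [hpe, h1] at heq
      show M e v = 1 ↔ ¬ f (Sum.inl v) = 1
      rcases (hM e v).1 hv with hm | hm <;>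
        rcases (mul_self_eq_one_iff).mp (hf2 (Sum.inl v)) with hfv | hfv <;>
        rw [hm, hfv] at heq ⊢ <;> norm_num at heq <;> norm_num
end

section
/- An oriented hypergraph G^σ is incidence balanced if and only if its signed incidence graph IG^σ — the bipartite graph on V(G) ∪ E(G) with an edge for each incidence (e,v), signed by σ(e,v) — is a balanced signed graph (every cycle has positive sign product). -/
open Matrix BigOperators

variable {V E : Type*}

/-- A signed graph (a graph `G` together with edge signs `sgn`) is balanced if every cycle
has positive sign product. -/
def SignedGraphBalanced {α : Type*} (G : SimpleGraph α) (sgn : α → α → ℝ) : Prop :=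
  ∀ (x : α) (w : G.Walk x x), w.IsCycle →
    (w.darts.map fun d => sgn d.toProd.1 d.toProd.2).prod = 1


section Aux

open SimpleGraph

variable {α : Type*} {G : SimpleGraph α}

/-- The sign of a walk with respect to an edge sign function. -/
def wsgn (sgn : α → α → ℝ) {x y : α} (w : G.Walk x y) : ℝ :=
  (w.darts.map fun d => sgn d.toProd.1 d.toProd.2).prod

variable (sgn : α → α → ℝ)

@[simp] lemma wsgn_nil {x : α} : wsgn sgn (Walk.nil : G.Walk x x) = 1 := rfl

@[simp] lemma wsgn_cons {x y z : α} (h : G.Adj x y) (p : G.Walk y z) :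
    wsgn sgn (Walk.cons h p) = sgn x y * wsgn sgn p := by
  simp [wsgn]

@[simp] lemma wsgn_append {x y z : α} (p : G.Walk x y) (q : G.Walk y z) :
    wsgn sgn (p.append q) = wsgn sgn p * wsgn sgn q := by
  simp [wsgn, Walk.darts_append]

lemma wsgn_pm (hpm : ∀ a b, G.Adj a b → sgn a b = 1 ∨ sgn a b = -1)
    {x y : α} (w : G.Walk x y) : wsgn sgn w = 1 ∨ wsgn sgn w = -1 := by
  induction w with
  | nil => simp
  | cons h p ih =>
    rw [wsgn_cons]
    rcases hpm _ _ h with h1 | h1 <;> rcases ih with h2 | h2 <;> rw [h1, h2] <;> norm_num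

lemma wsgn_sq (hpm : ∀ a b, G.Adj a b → sgn a b = 1 ∨ sgn a b = -1)
    {x y : α} (w : G.Walk x y) : wsgn sgn w * wsgn sgn w = 1 := by
  rcases wsgn_pm sgn hpm w with h | h <;> rw [h] <;> norm_num

lemma wsgn_reverse (hsymm : ∀ a b, sgn a b = sgn b a) {x y : α} (w : G.Walk x y) :
    wsgn sgn w.reverse = wsgn sgn w := by
  rw [wsgn, Walk.darts_reverse, List.map_reverse, List.prod_reverse, List.map_map]
  congr 1
  apply List.map_congr_left
  intro d _
  exact (hsymm d.toProd.1 d.toProd.2).symm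

lemma wsgn_rotate [DecidableEq α] {u x : α} (w : G.Walk x x) (h : u ∈ w.support) :
    wsgn sgn (w.rotate u h) = wsgn sgn w := by
  rw [wsgn, wsgn]
  exact List.Perm.prod_eq (List.Perm.map _ (Walk.rotate_darts w u h).perm)

/-- A closed path (as a walk) is nil. -/
lemma closed_path_nil {x : α} (t : G.Walk x x) (ht : t.IsPath) : t.length = 0 := by
  cases t with
  | nil => rfl
  | cons h p =>
    exfalso
    rw [Walk.cons_isPath_iff] at ht
    exact ht.2 p.end_mem_support

/-- Split off the last edge of a path ending at `x` that contains the edge `s(x,y)`. -/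
lemma path_last_edge (hsymm : ∀ a b, sgn a b = sgn b a) :
    ∀ {a x y : α} (p : G.Walk a x), p.IsPath → s(x, y) ∈ p.edges →
      ∃ q : G.Walk a y, q.length + 1 = p.length ∧ wsgn sgn p = wsgn sgn q * sgn y x := by
  intro a x y p
  induction p with
  | nil => intro _ he; simp at he
  | @cons a z x h t ih =>
    intro hp he
    rw [Walk.cons_isPath_iff] at hp
    rw [Walk.edges_cons, List.mem_cons] at he
    rcases he with he | he
    · rw [Sym2.eq_iff] at he
      rcases he with ⟨hxa, hyz⟩ | ⟨hxz, hya⟩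
      · exfalso
        subst hxa
        exact hp.2 t.end_mem_support
      · subst hxz; subst hya
        have h0 : t.length = 0 := closed_path_nil t hp.1
        cases t with
        | nil =>
          refine ⟨Walk.nil, by simp, ?_⟩
          simp [hsymm a x]
        | cons h' p' => simp at h0
    · obtain ⟨q, hq1, hq2⟩ := ih hp.1 he
      refine ⟨Walk.cons h q, ?_, ?_⟩
      · simp only [Walk.length_cons]; omega
      · rw [wsgn_cons, wsgn_cons, hq2]; ring

/-- Split a closed walk at a repeated base point into two strictly shorter closed walks. -/
lemma split_closed_walk [DecidableEq α] {u : α} (w : G.Walk u u)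
    (hcnt : 2 ≤ w.support.tail.count u) :
    ∃ (c1 c2 : G.Walk u u), c1.length < w.length ∧ c2.length < w.length ∧
      wsgn sgn w = wsgn sgn c1 * wsgn sgn c2 := by
  classical
  cases w with
  | nil => simp at hcnt
  | @cons u y u h t =>
    rw [Walk.support_cons, List.tail_cons] at hcnt
    have hu : u ∈ t.support := List.count_pos_iff.mp (by omega)
    have hspec := t.take_spec hu
    have hone := t.count_support_takeUntil_eq_one hu
    have hsupp : t.support = (t.takeUntil u hu).support ++ (t.dropUntil u hu).support.tail := by
      conv_lhs => rw [← hspec]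
      exact Walk.support_append _ _
    have hb : u ∈ (t.dropUntil u hu).support.tail := by
      rw [← List.count_pos_iff]
      rw [hsupp, List.count_append, hone] at hcnt
      omega
    have hbne : (t.dropUntil u hu).length ≠ 0 := by
      intro h0
      cases hq : t.dropUntil u hu with
      | nil => rw [hq] at hb; simp at hb
      | cons h' p' => rw [hq] at h0; simp at h0
    refine ⟨Walk.cons h (t.takeUntil u hu), t.dropUntil u hu, ?_, ?_, ?_⟩
    · have := congrArg Walk.length hspec
      rw [Walk.length_append] at this
      simp only [Walk.length_cons]
      omega
    · have := congrArg Walk.length hspec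
      rw [Walk.length_append] at this
      simp only [Walk.length_cons]
      omega
    · conv_lhs => rw [← hspec, ← Walk.cons_append]
      rw [wsgn_append]

/-- Harary: in a balanced signed graph every closed walk has sign `1`. -/
lemma wsgn_closed (hsymm : ∀ a b, sgn a b = sgn b a)
    (hpm : ∀ a b, G.Adj a b → sgn a b = 1 ∨ sgn a b = -1)
    (hbal : SignedGraphBalanced G sgn) :
    ∀ (n : ℕ) {x : α} (w : G.Walk x x), w.length = n → wsgn sgn w = 1 := by
  classical
  intro n
  induction n using Nat.strong_induction_on with
  | _ n ih =>
    intro x w hl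
    cases w with
    | nil => simp
    | @cons x y x h p =>
      by_cases hc : (Walk.cons h p).IsCycle
      · exact hbal x _ hc
      · rw [Walk.cons_isCycle_iff] at hc
        by_cases hp : p.IsPath
        · have he : s(x, y) ∈ p.edges := by tauto
          obtain ⟨q, hq1, hq2⟩ := path_last_edge sgn hsymm p hp he
          have hxy : sgn x y * sgn y x = 1 := by
            rw [hsymm y x]
            rcases hpm x y h with h1 | h1 <;> rw [h1] <;> norm_num
          have hqlen : q.length < n := by
            simp only [Walk.length_cons] at hl
            omega
          have := ih q.length hqlen q rfl
          rw [wsgn_cons, hq2, this]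
          calc sgn x y * (1 * sgn y x) = sgn x y * sgn y x := by ring
            _ = 1 := hxy
        · have hnodup : ¬p.support.Nodup := by rwa [Walk.isPath_def] at hp
          obtain ⟨u, hu⟩ := List.exists_duplicate_iff_not_nodup.mpr hnodup
          have hcnt : 2 ≤ p.support.count u := List.duplicate_iff_two_le_count.mp hu
          have hus : u ∈ (Walk.cons h p).support := by
            rw [Walk.support_cons]
            exact List.mem_cons_of_mem _ hu.mem
          have hcnt' : 2 ≤ ((Walk.cons h p).rotate u hus).support.tail.count u := by
            have hperm := ((Walk.cons h p).support_rotate u hus).perm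
            rw [hperm.count_eq]
            rw [Walk.support_cons, List.tail_cons]
            exact hcnt
          obtain ⟨c1, c2, h1, h2, h3⟩ := split_closed_walk sgn _ hcnt'
          have hrl : ((Walk.cons h p).rotate u hus).length = n := by
            have hld := ((Walk.cons h p).rotate_darts u hus).perm.length_eq
            rw [Walk.length_darts, Walk.length_darts] at hld
            omega
          rw [← wsgn_rotate sgn (Walk.cons h p) hus, h3,
            ih c1.length (by omega) c1 rfl, ih c2.length (by omega) c2 rfl]
          norm_num

end Aux

/-- `G^σ` is incidence balanced iff its signed incidence graph `IG^σ`
is a balanced signed graph. -/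
theorem incBalanced_iff_incidenceGraph_balanced
    (mem : E → V → Prop) (M : Matrix E V ℝ) (hM : IsOrientation mem M) :
    IncBalanced mem M ↔ SignedGraphBalanced (incGraph mem) (pairSign M) := by
  classical
  have hsymm : ∀ a b : V ⊕ E, pairSign M a b = pairSign M b a := by
    rintro (v | e) (w | f) <;> rfl
  have hpm : ∀ a b, (incGraph mem).Adj a b → pairSign M a b = 1 ∨ pairSign M a b = -1 := by
    rintro a b (⟨v, e, rfl, rfl, hve⟩ | ⟨v, e, rfl, rfl, hve⟩) <;>
      exact (hM e v).1 hve
  constructor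
  · -- forward direction
    rintro ⟨X, hX⟩
    set θ : V ⊕ E → ℝ := fun a =>
      match a with
      | Sum.inl v => if X v then 1 else -1
      | Sum.inr e => if (∀ v, mem e v → (M e v = 1 ↔ X v)) then 1 else -1 with hθ
    have hθsq : ∀ a, θ a * θ a = 1 := by
      rintro (v | e) <;> simp only [hθ] <;> split <;> norm_num
    have hkey : ∀ e v, mem e v → M e v = θ (Sum.inl v) * θ (Sum.inr e) := by
      intro e v hve
      simp only [hθ]
      by_cases hc : ∀ v, mem e v → (M e v = 1 ↔ X v)
      · rw [if_pos hc]
        by_cases hx : X v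
        · rw [if_pos hx, (hc v hve).mpr hx]; norm_num
        · rw [if_neg hx]
          rcases (hM e v).1 hve with h1 | h1
          · exact absurd ((hc v hve).mp h1) hx
          · rw [h1]; norm_num
      · rw [if_neg hc]
        have hc2 : ∀ v, mem e v → (M e v = 1 ↔ ¬ X v) := (hX e).resolve_left hc
        by_cases hx : X v
        · rw [if_pos hx]
          rcases (hM e v).1 hve with h1 | h1
          · exact absurd ((hc2 v hve).mp h1) (not_not.mpr hx)
          · rw [h1]; norm_num
        · rw [if_neg hx, (hc2 v hve).mpr hx]; norm_num
    have hedge : ∀ a b, (incGraph mem).Adj a b → pairSign M a b = θ a * θ b := by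
      rintro a b (⟨v, e, rfl, rfl, hve⟩ | ⟨v, e, rfl, rfl, hve⟩)
      · exact hkey e v hve
      · rw [mul_comm]; exact hkey e v hve
    have htel : ∀ {x y : V ⊕ E} (w : (incGraph mem).Walk x y),
        wsgn (pairSign M) w = θ x * θ y := by
      intro x y w
      induction w with
      | nil => rw [wsgn_nil]; exact (hθsq _).symm
      | @cons x z y h p ih =>
        rw [wsgn_cons, ih, hedge x z h]
        have := hθsq z
        calc θ x * θ z * (θ z * θ y) = θ x * (θ z * θ z) * θ y := by ring
          _ = θ x * θ y := by rw [this]; ring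
    intro x w _
    have := htel w
    rw [wsgn] at this
    rw [this]
    exact hθsq x
  · -- backward direction
    intro hbal
    have hclosed : ∀ {x : V ⊕ E} (w : (incGraph mem).Walk x x), wsgn (pairSign M) w = 1 :=
      fun w => wsgn_closed (pairSign M) hsymm hpm hbal _ w rfl
    set G := incGraph mem with hG
    let rep : V ⊕ E → V ⊕ E := fun a => Quot.out (G.connectedComponentMk a)
    have hrep : ∀ a, G.Reachable a (rep a) := by
      intro a
      apply SimpleGraph.ConnectedComponent.exact
      show G.connectedComponentMk a = G.connectedComponentMk (rep a)
      exact (Quot.out_eq (G.connectedComponentMk a)).symm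
    let θ : V ⊕ E → ℝ := fun a => wsgn (pairSign M) (hrep a).some
    have hθpm : ∀ a, θ a = 1 ∨ θ a = -1 := fun a => wsgn_pm _ hpm _
    have hθsq : ∀ a, θ a * θ a = 1 := by
      intro a; rcases hθpm a with h | h <;> rw [h] <;> norm_num
    have hedge : ∀ a b, G.Adj a b → pairSign M a b = θ a * θ b := by
      intro a b hab
      have hcomp : rep b = rep a := by
        show Quot.out (G.connectedComponentMk b) = Quot.out (G.connectedComponentMk a)
        rw [SimpleGraph.ConnectedComponent.sound hab.reachable.symm]
      have hone := hclosed
        (((hrep a).some.reverse.append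
          (SimpleGraph.Walk.cons hab ((hrep b).some.copy rfl hcomp))))
      rw [wsgn_append, wsgn_reverse _ hsymm, wsgn_cons] at hone
      have hcopy : wsgn (pairSign M) ((hrep b).some.copy rfl hcomp) =
          wsgn (pairSign M) (hrep b).some := by
        rw [wsgn, wsgn, SimpleGraph.Walk.darts_copy]
      rw [hcopy] at hone
      have h1 := hθsq a
      have h2 := hθsq b
      show pairSign M a b = θ a * θ b
      have ha : θ a = wsgn (pairSign M) (hrep a).some := rfl
      have hb : θ b = wsgn (pairSign M) (hrep b).some := rfl
      rw [← ha, ← hb] at hone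
      linear_combination (θ a * θ b) * hone - (pairSign M a b * θ b * θ b) * h1 - (pairSign M a b) * h2
    refine ⟨fun v => θ (Sum.inl v) = 1, ?_⟩
    intro e
    have hadj : ∀ v, mem e v → G.Adj (Sum.inl v) (Sum.inr e) := fun v hv =>
      Or.inl ⟨v, e, rfl, rfl, hv⟩
    rcases hθpm (Sum.inr e) with he | he
    · left
      intro v hv
      have := hedge _ _ (hadj v hv)
      have hMv : M e v = θ (Sum.inl v) := by
        rw [show pairSign M (Sum.inl v) (Sum.inr e) = M e v from rfl] at this
        rw [this, he, mul_one]
      rw [hMv]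
    · right
      intro v hv
      have := hedge _ _ (hadj v hv)
      have hMv : M e v = -θ (Sum.inl v) := by
        rw [show pairSign M (Sum.inl v) (Sum.inr e) = M e v from rfl] at this
        rw [this, he]; ring
      rw [hMv]
      rcases hθpm (Sum.inl v) with hv1 | hv1 <;> simp [hv1] <;> norm_num
end

section
/- Let G be a connected hypergraph and suppose ρ(A(G^+)) is an eigenvalue of A(G^σ) with real eigenvector x. Then x has no zero entries, and with S = diag(x_v/|x_v|), one has S^{-1} A(G^σ) S = A(G^+). -/
open Matrix BigOperators

variable {V E : Type*}

section AuxPF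

variable [Fintype V] [DecidableEq V]

lemma isEigenvalueC_of_real {B : Matrix V V ℝ} {μ : ℝ} {w : V → ℝ}
    (hw : w ≠ 0) (h : B.mulVec w = μ • w) : IsEigenvalueC B (μ : ℂ) := by
  refine ⟨fun v => (w v : ℂ), ?_, ?_⟩
  · intro h0
    apply hw
    ext v
    have := congrFun h0 v
    simpa using this
  · ext u
    have h1 := congrFun h u
    simp only [Matrix.mulVec, dotProduct, Pi.smul_apply, smul_eq_mul,
      Matrix.map_apply] at h1 ⊢
    exact_mod_cast h1

lemma abs_le_specRad_of_isEigenvalueC {B : Matrix V V ℝ} {μ : ℂ}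
    (h : IsEigenvalueC B μ) : ‖μ‖ ≤ specRad B := by
  unfold specRad
  have hbdd : BddAbove {r | ∃ μ : ℂ, IsEigenvalueC B μ ∧ r = ‖μ‖} := by
    refine ⟨∑ k, ∑ j, |B k j|, ?_⟩
    rintro r ⟨ν, ⟨z, hz, hmul⟩, rfl⟩
    have hev : Module.End.HasEigenvalue (Matrix.toLin' (B.map fun a => (a : ℂ))) ν :=
      Module.End.hasEigenvalue_of_hasEigenvector
        ⟨Module.End.mem_eigenspace_iff.mpr (by rw [Matrix.toLin'_apply]; exact hmul), hz⟩
    obtain ⟨k, hk⟩ := eigenvalue_mem_ball hev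
    rw [Metric.mem_closedBall, dist_eq_norm] at hk
    have h2 : ∀ j, ‖(B.map fun a => (a : ℂ)) k j‖ = |B k j| := by
      intro j; simp [Matrix.map_apply, Complex.norm_real, Real.norm_eq_abs]
    have h3 : ‖ν‖ ≤ ∑ j, |B k j| := by
      calc ‖ν‖ = ‖(B.map fun a => (a : ℂ)) k k + (ν - (B.map fun a => (a : ℂ)) k k)‖ := by
            congr 1; ring
        _ ≤ ‖(B.map fun a => (a : ℂ)) k k‖ + ‖ν - (B.map fun a => (a : ℂ)) k k‖ := norm_add_le _ _
        _ ≤ ‖(B.map fun a => (a : ℂ)) k k‖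
            + ∑ j ∈ Finset.univ.erase k, ‖(B.map fun a => (a : ℂ)) k j‖ := by
            exact add_le_add_right hk _
        _ = ∑ j, ‖(B.map fun a => (a : ℂ)) k j‖ :=
            Finset.add_sum_erase Finset.univ (fun j => ‖(B.map fun a => (a : ℂ)) k j‖)
              (Finset.mem_univ k)
        _ = ∑ j, |B k j| := by simp [h2]
    refine h3.trans ?_
    exact Finset.single_le_sum (f := fun k => ∑ j, |B k j|)
      (fun i _ => Finset.sum_nonneg fun j _ => abs_nonneg _) (Finset.mem_univ k)
  exact le_csSup hbdd ⟨μ, h, rfl⟩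

end AuxPF

/-- if `G` is connected and `ρ(A(G⁺))` is an eigenvalue of `A(G^σ)` with a real
eigenvector `x`, then `x` has no zero entries and, with `S = diag(x_v/|x_v|)`,
`S⁻¹ A(G^σ) S = A(G⁺)`. -/
theorem perron_equality_case [Fintype V] [Fintype E] [DecidableEq V]
    (mem : E → V → Prop) [∀ e v, Decidable (mem e v)] (M : Matrix E V ℝ)
    (hM : IsOrientation mem M) (hconn : HConnected mem)
    (x : V → ℝ) (hx : x ≠ 0)
    (heig : (adjMat M).mulVec x = specRad (adjMat (Mplus mem)) • x) :
    (∀ v, x v ≠ 0) ∧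
      (Matrix.diagonal fun v => x v / |x v|)⁻¹ * adjMat M *
          (Matrix.diagonal fun v => x v / |x v|) = adjMat (Mplus mem) := by
  classical
  set A := adjMat M with hAdef
  set B := adjMat (Mplus mem) with hBdef
  set ρ := specRad B with hρdef
  set s : V → ℝ := fun v => x v / |x v| with hsdef
  set y : V → ℝ := fun v => |x v| with hydef
  obtain ⟨v₀, hv₀⟩ : ∃ v, x v ≠ 0 := Function.ne_iff.mp hx
  haveI : Nonempty V := ⟨v₀⟩
  -- |M| is Mplus entrywise
  have hMabs : ∀ e v, |M e v| = Mplus mem e v := by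
    intro e v
    by_cases h : mem e v
    · rcases (hM e v).1 h with h1 | h1 <;> simp [Mplus, h, h1]
    · simp [Mplus, h, (hM e v).2 h]
  have hMp : ∀ e v, 0 ≤ Mplus mem e v := by
    intro e v; rw [← hMabs]; exact abs_nonneg _
  -- B is symmetric, nonnegative, dominates |A|
  have hBsymm : B.IsHermitian := by
    unfold Matrix.IsHermitian
    ext u v
    simp only [Matrix.conjTranspose_apply, star_trivial, hBdef, adjMat, Matrix.of_apply]
    rcases eq_or_ne u v with rfl | h
    · simp
    · rw [if_neg (Ne.symm h), if_neg h]
      exact Finset.sum_congr rfl fun e _ => mul_comm _ _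
  have hBnn : ∀ u v, 0 ≤ B u v := by
    intro u v
    simp only [hBdef, adjMat, Matrix.of_apply]
    split
    · exact le_refl _
    · exact Finset.sum_nonneg fun e _ => mul_nonneg (hMp e u) (hMp e v)
  have habs : ∀ u v, |A u v| ≤ B u v := by
    intro u v
    simp only [hAdef, hBdef, adjMat, Matrix.of_apply]
    rcases eq_or_ne u v with rfl | h
    · simp
    · rw [if_neg h, if_neg h]
      refine (Finset.abs_sum_le_sum_abs _ _).trans (le_of_eq ?_)
      exact Finset.sum_congr rfl fun e _ => by rw [abs_mul, hMabs, hMabs]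
  -- eigenvalue bounds for B
  have heigC : ∀ i, IsEigenvalueC B ((hBsymm.eigenvalues i : ℝ) : ℂ) := by
    intro i
    refine isEigenvalueC_of_real ?_ (hBsymm.mulVec_eigenvectorBasis i)
    intro h
    exact hBsymm.eigenvectorBasis.orthonormal.ne_zero i
      (by ext v; exact congrFun h v)
  have hle : ∀ i, hBsymm.eigenvalues i ≤ ρ := by
    intro i
    have := abs_le_specRad_of_isEigenvalueC (heigC i)
    rw [Complex.norm_real, Real.norm_eq_abs] at this
    exact (le_abs_self _).trans this
  have hρ0 : 0 ≤ ρ := by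
    have := abs_le_specRad_of_isEigenvalueC (heigC v₀)
    exact le_trans (norm_nonneg _) this
  -- ρ • 1 - B is positive semidefinite
  have hPSD : (ρ • (1 : Matrix V V ℝ) - B).PosSemidef := by
    have hU : (hBsymm.eigenvectorUnitary : Matrix V V ℝ) *
        star (hBsymm.eigenvectorUnitary : Matrix V V ℝ) = 1 :=
      Matrix.mem_unitaryGroup_iff.mp hBsymm.eigenvectorUnitary.2
    have hdiag : Matrix.diagonal (fun i : V => ρ - hBsymm.eigenvalues i)
        = ρ • (1 : Matrix V V ℝ) - Matrix.diagonal (RCLike.ofReal ∘ hBsymm.eigenvalues) := by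
      ext i j
      rcases eq_or_ne i j with rfl | h
      · simp [Matrix.one_apply, RCLike.ofReal]
      · simp [Matrix.diagonal_apply_ne _ h, Matrix.one_apply_ne h]
    have hdecomp : ρ • (1 : Matrix V V ℝ) - B
        = (hBsymm.eigenvectorUnitary : Matrix V V ℝ) *
          Matrix.diagonal (fun i => ρ - hBsymm.eigenvalues i) *
          (hBsymm.eigenvectorUnitary : Matrix V V ℝ)ᴴ := by
      conv_lhs => rw [hBsymm.spectral_theorem]
      rw [hdiag, Matrix.mul_sub, Matrix.sub_mul]
      congr 1
      rw [Matrix.mul_smul, Matrix.mul_one, Matrix.smul_mul, ← Matrix.star_eq_conjTranspose, hU]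
    rw [hdecomp]
    exact (Matrix.posSemidef_diagonal_iff.mpr fun i => sub_nonneg.mpr (hle i)).mul_mul_conjTranspose_same _
  -- Rayleigh equality forces B y = ρ y
  have hyv : ∀ v, y v = |x v| := fun _ => rfl
  have hxx : dotProduct x x = dotProduct y y := by
    refine Finset.sum_congr rfl fun v _ => ?_
    rw [hyv, abs_mul_abs_self]
  have h1 : dotProduct x (A *ᵥ x) = ρ * dotProduct x x := by
    rw [heig, dotProduct_smul, smul_eq_mul]
  have h2 : dotProduct x (A *ᵥ x) ≤ dotProduct y (B *ᵥ y) := by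
    simp only [dotProduct, Matrix.mulVec]
    refine Finset.sum_le_sum fun u _ => ?_
    simp only [dotProduct, Finset.mul_sum]
    refine Finset.sum_le_sum fun v _ => ?_
    calc x u * (A u v * x v) ≤ |x u * (A u v * x v)| := le_abs_self _
      _ = y u * (|A u v| * y v) := by rw [abs_mul, abs_mul, hyv, hyv]
      _ ≤ y u * (B u v * y v) := by
          refine mul_le_mul_of_nonneg_left ?_ (abs_nonneg _)
          exact mul_le_mul_of_nonneg_right (habs u v) (abs_nonneg _)
  have hray : ρ * dotProduct y y ≤ dotProduct y (B *ᵥ y) := by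
    rw [← hxx, ← h1]; exact h2
  have hqform : dotProduct y ((ρ • (1 : Matrix V V ℝ) - B) *ᵥ y)
      = ρ * dotProduct y y - dotProduct y (B *ᵥ y) := by
    rw [Matrix.sub_mulVec, Matrix.smul_mulVec, Matrix.one_mulVec,
      dotProduct_sub, dotProduct_smul, smul_eq_mul]
  have hstar : star y = y := by
    ext v; simp
  have hq0 : dotProduct (star y) ((ρ • (1 : Matrix V V ℝ) - B) *ᵥ y) = 0 := by
    rw [hstar]
    refine le_antisymm ?_ ?_
    · rw [hqform]; linarith
    · have := hPSD.dotProduct_mulVec_nonneg y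
      rwa [hstar] at this
  have hBy : B *ᵥ y = ρ • y := by
    have h0 := (hPSD.dotProduct_mulVec_zero_iff y).mp hq0
    rw [Matrix.sub_mulVec, Matrix.smul_mulVec, Matrix.one_mulVec, sub_eq_zero] at h0
    exact h0.symm
  -- pointwise eigen-equations
  have hByv : ∀ v, ∑ u, B v u * y u = ρ * y v := by
    intro v
    have := congrFun hBy v
    simpa [Matrix.mulVec, dotProduct] using this
  have hAxv : ∀ v, ∑ u, A v u * x u = ρ * x v := by
    intro v
    have := congrFun heig v
    simpa [Matrix.mulVec, dotProduct] using this
  -- zero entries propagate along edges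
  have hBge1 : ∀ {u v : V} (e : E), u ≠ v → mem e u → mem e v → (1 : ℝ) ≤ B u v := by
    intro u v e huv hu hv
    simp only [hBdef, adjMat, Matrix.of_apply, if_neg huv]
    have h1 : (1 : ℝ) = Mplus mem e u * Mplus mem e v := by simp [Mplus, hu, hv]
    rw [h1]
    exact Finset.single_le_sum (fun e' _ => mul_nonneg (hMp e' u) (hMp e' v)) (Finset.mem_univ e)
  have hprop : ∀ v, x v = 0 → ∀ e, mem e v → ∀ u, mem e u → x u = 0 := by
    intro v hv e hev u heu
    rcases eq_or_ne u v with rfl | huv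
    · exact hv
    have hsum : ∑ u, B v u * y u = 0 := by
      rw [hByv v, hyv, hv, abs_zero, mul_zero]
    have hterm := (Finset.sum_eq_zero_iff_of_nonneg
      (fun u _ => mul_nonneg (hBnn v u) (abs_nonneg (x u)))).mp hsum u (Finset.mem_univ u)
    have hB1 : (1 : ℝ) ≤ B v u := hBge1 e (Ne.symm huv) hev heu
    have hy0 : y u = 0 := by
      rcases mul_eq_zero.mp hterm with h | h
      · linarith
      · exact h
    rw [hyv, abs_eq_zero] at hy0
    exact hy0
  -- connectivity: no zero entries
  have hx0 : ∀ v, x v ≠ 0 := by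
    have hzero : ∀ {a b : V ⊕ E} (w : (incGraph mem).Walk a b),
        Sum.elim (fun v => x v = 0) (fun e => ∀ u, mem e u → x u = 0) a →
        Sum.elim (fun v => x v = 0) (fun e => ∀ u, mem e u → x u = 0) b := by
      intro a b w
      induction w with
      | nil => exact id
      | cons h p ih =>
        intro ha
        apply ih
        rcases h with ⟨v, e, rfl, rfl, hme⟩ | ⟨v, e, rfl, rfl, hme⟩
        · exact fun u hu => hprop v ha e hme u hu
        · exact ha v hme
    intro v hv
    obtain ⟨w⟩ := hconn.preconnected (Sum.inl v) (Sum.inl v₀)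
    exact hv₀ (hzero w hv)
  refine ⟨hx0, ?_⟩
  -- sign vector facts
  have hsv : ∀ v, s v = x v / |x v| := fun _ => rfl
  have hs1 : ∀ v, |s v| = 1 := by
    intro v
    rw [hsv, abs_div, abs_abs, div_self (abs_ne_zero.mpr (hx0 v))]
  have hss : ∀ v, s v * s v = 1 := by
    intro v
    rw [← abs_mul_abs_self (s v), hs1, one_mul]
  have hsx : ∀ v, s v * x v = y v := by
    intro v
    rw [hsv, hyv, div_mul_eq_mul_div, ← abs_mul_abs_self (x v), mul_div_assoc,
      div_self (abs_ne_zero.mpr (hx0 v)), mul_one]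
  have hsy : ∀ v, s v * y v = x v := by
    intro v
    rw [hsv, hyv]
    exact div_mul_cancel₀ (x v) (abs_ne_zero.mpr (hx0 v))
  -- termwise equality
  have hkey : ∀ v u, B v u * y u = s v * (A v u * x u) := by
    intro v
    have hsum : ∑ u, (B v u * y u - s v * (A v u * x u)) = 0 := by
      rw [Finset.sum_sub_distrib, hByv v, ← Finset.mul_sum, hAxv v,
        show s v * (ρ * x v) = ρ * (s v * x v) by ring, hsx v, sub_self]
    have hnn : ∀ u ∈ Finset.univ, (0 : ℝ) ≤ B v u * y u - s v * (A v u * x u) := by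
      intro u _
      have h1 : s v * (A v u * x u) ≤ |s v * (A v u * x u)| := le_abs_self _
      have h2 : |s v * (A v u * x u)| = |A v u| * y u := by
        rw [abs_mul, abs_mul, hs1, one_mul, hyv]
      have h3 : |A v u| * y u ≤ B v u * y u :=
        mul_le_mul_of_nonneg_right (habs v u) (abs_nonneg (x u))
      linarith [h1, h2.le, h2.ge, h3]
    intro u
    have h0 := (Finset.sum_eq_zero_iff_of_nonneg hnn).mp hsum u (Finset.mem_univ u)
    linarith [h0]
  -- final matrix identity
  have hSS : Matrix.diagonal s * Matrix.diagonal s = 1 := by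
    have hfun : (fun v => s v * s v) = fun _ => (1 : ℝ) := funext hss
    rw [Matrix.diagonal_mul_diagonal, hfun, Matrix.diagonal_one]
  have hSinv : (Matrix.diagonal s)⁻¹ = Matrix.diagonal s := Matrix.inv_eq_left_inv hSS
  rw [hSinv]
  ext u v
  rw [Matrix.mul_diagonal, Matrix.diagonal_mul]
  have hyvne : y v ≠ 0 := by rw [hyv]; exact abs_ne_zero.mpr (hx0 v)
  have hstep : s u * A u v * s v * y v = s u * (A u v * x v) := by
    rw [mul_assoc (s u * A u v) (s v) (y v), hsy v, mul_assoc]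
  have := hkey u v
  have hfin : s u * A u v * s v * y v = B u v * y v := by rw [hstep, ← this]
  exact mul_right_cancel₀ hyvne hfin
end

section
/- Let G^σ be a connected k-uniform oriented hypergraph with k even, and let ΓG^σ be the induced signed hypergraph with edge signs sgn_σ(e) = (-1)^{k-1} Π_{v∈e} σ(e,v). Then ΓG^σ is switching equivalent to ΓG^+ if and only if -ρ(A(G)) is an H-eigenvalue (an eigenvalue with a real eigenvector) of the adjacency tensor A(ΓG^σ). -/
open BigOperators

variable {V : Type*}

/-- The adjacency tensor of a signed `k`-uniform hypergraph with edge set `E` and edge signs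
`γ`: the entry at a tuple whose underlying vertex set is an edge `e` is `γ(e)/(k-1)!`,
and all other entries are `0`. -/
noncomputable def adjT (R : Type*) [Field R] [Fintype V] [DecidableEq V] (k : ℕ)
    (E : Finset (Finset V)) (γ : Finset V → R) : (Fin k → V) → R :=
  fun i => if Finset.image i Finset.univ ∈ E
    then γ (Finset.image i Finset.univ) / (Nat.factorial (k - 1) : R) else 0

/-- `(lam, x)` is an eigenpair of the order-`k` tensor `A`:
`x ≠ 0` and `(A x^{k-1})_v = lam * x_v^{k-1}` for every `v`. -/
def IsTensorEigenpair (R : Type*) [CommRing R] [Fintype V] [DecidableEq V] (k : ℕ) [NeZero k]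
    (A : (Fin k → V) → R) (lam : R) (x : V → R) : Prop :=
  x ≠ 0 ∧ ∀ v : V,
    (∑ i : Fin k → V, if i 0 = v
      then A i * ∏ j ∈ Finset.univ.filter (fun j : Fin k => j ≠ 0), x (i j) else 0)
    = lam * x v ^ (k - 1)

/-- The spectral radius of a real order-`k` tensor: the supremum of the moduli of its
(complex) eigenvalues. -/
noncomputable def tSpecRad [Fintype V] [DecidableEq V] (k : ℕ) [NeZero k]
    (A : (Fin k → V) → ℝ) : ℝ :=
  sSup {r | ∃ lam : ℂ,
    (∃ x : V → ℂ, IsTensorEigenpair ℂ k (fun i => ((A i : ℝ) : ℂ)) lam x) ∧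
      r = ‖lam‖}

/-- One vertex switching on a signed hypergraph: negate the sign of every edge containing `w`. -/
def VSwitchStep [DecidableEq V] (γ δ : Finset V → ℝ) : Prop :=
  ∃ w : V, ∀ e, δ e = if w ∈ e then -γ e else γ e

/-- Two signed hypergraphs (with common edge set `E`) are switching equivalent if one is
obtained from the other by a finite sequence of vertex switchings (signs off `E` are
irrelevant). -/
def SignedSwitchEquiv [DecidableEq V] (E : Finset (Finset V)) (γ γ' : Finset V → ℝ) : Prop :=
  ∃ δ, Relation.ReflTransGen VSwitchStep γ δ ∧ ∀ e ∈ E, δ e = γ' e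

/-- The action `S T S` of a signature matrix (diagonal ±1 matrix) `S` on an order-`k` tensor:
`(S T S)_{i_1…i_k} = S_{i_1 i_1} t_{i_1…i_k} S_{i_2 i_2} ⋯ S_{i_k i_k}`. -/
def conjT (R : Type*) [CommRing R] [DecidableEq V] (k : ℕ) [NeZero k] [Fintype V]
    (S : V → R) (A : (Fin k → V) → R) : (Fin k → V) → R :=
  fun i => S (i 0) * A i * ∏ j ∈ Finset.univ.filter (fun j : Fin k => j ≠ 0), S (i j)

/-- The diagonal degree tensor `D(G)` of the hypergraph with edge set `E`:
`d_{v…v} = deg v`, all other entries `0`. -/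
noncomputable def degT [Fintype V] [DecidableEq V] (k : ℕ) [NeZero k]
    (E : Finset (Finset V)) : (Fin k → V) → ℝ :=
  fun i => if ∀ j, i j = i 0 then ((E.filter fun e => i 0 ∈ e).card : ℝ) else 0

/-- The Laplacian tensor `L(Γ) = D(G) + A(Γ)` of a signed `k`-uniform hypergraph. -/
noncomputable def lapT [Fintype V] [DecidableEq V] (k : ℕ) [NeZero k]
    (E : Finset (Finset V)) (γ : Finset V → ℝ) : (Fin k → V) → ℝ :=
  fun i => degT k E i + adjT ℝ k E γ i

/-- `σ` is an incidence orientation of the hypergraph with edge set `E`: each incidence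
`(e, v)` with `v ∈ e ∈ E` is labeled `+1` or `-1`. -/
def IsIncidenceOrientation (E : Finset (Finset V)) (σ : Finset V → V → ℝ) : Prop :=
  ∀ e ∈ E, ∀ v ∈ e, σ e v = 1 ∨ σ e v = -1

/-- The edge signs of the signed hypergraph `ΓG^σ` induced by an orientation `σ`:
`sgn_σ(e) = (-1)^{|e|-1} ∏_{v ∈ e} σ(e,v)` (for `k`-uniform edges, `|e| = k`). -/
def inducedSign [DecidableEq V] (k : ℕ) (σ : Finset V → V → ℝ) : Finset V → ℝ :=
  fun e => (-1 : ℝ) ^ (k - 1) * ∏ v ∈ e, σ e v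

/-- The incidence graph of the hypergraph with edge set `E`. -/
def hIncGraph [DecidableEq V] (E : Finset (Finset V)) : SimpleGraph (V ⊕ {e // e ∈ E}) where
  Adj x y := (∃ v e, x = Sum.inl v ∧ y = Sum.inr e ∧ v ∈ e.1) ∨
             (∃ v e, x = Sum.inr e ∧ y = Sum.inl v ∧ v ∈ e.1)
  symm := ⟨by
    rintro x y (⟨v, e, h1, h2, h3⟩ | ⟨v, e, h1, h2, h3⟩)
    · exact Or.inr ⟨v, e, h2, h1, h3⟩
    · exact Or.inl ⟨v, e, h2, h1, h3⟩⟩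
  loopless := ⟨by
    rintro x (⟨v, e, h1, h2, h3⟩ | ⟨v, e, h1, h2, h3⟩) <;> subst h1 <;> simp at h2⟩

/-- A hypergraph is connected if any two elements of `V ∪ E` are joined by a walk. -/
def HConnectedF [DecidableEq V] (E : Finset (Finset V)) : Prop := (hIncGraph E).Connected

section AuxiliaryLemmas

open Finset

variable [DecidableEq V] [Fintype V]

/-! ### Combinatorial engine: tuple sums versus edge sums -/

private lemma aux_sum_cons_split {R : Type*} [AddCommMonoid R] (n : ℕ) (f : (Fin (n+1) → V) → R) :
    ∑ i : Fin (n+1) → V, f i = ∑ v : V, ∑ i' : Fin n → V, f (Fin.cons v i') := by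
  rw [← (Fin.consEquiv (fun _ : Fin (n+1) => V)).sum_comp, Fintype.sum_prod_type]
  rfl

private lemma aux_prod_filter_ne_zero {R : Type*} [CommMonoid R] (n : ℕ) (f : Fin (n+1) → R) :
    ∏ j ∈ univ.filter (fun j : Fin (n+1) => j ≠ 0), f j = ∏ j : Fin n, f j.succ := by
  rw [show univ.filter (fun j : Fin (n+1) => j ≠ 0) = Finset.image Fin.succ univ by
    ext j; simp [Fin.exists_succ_eq]]
  rw [Finset.prod_image (by intro a _ b _ h; exact Fin.succ_injective n h)]

omit [Fintype V] in
private lemma aux_insert_image_eq_iff {n : ℕ} (v : V) (i' : Fin n → V) (s : Finset V)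
    (hs : s.card = n + 1) (hv : v ∈ s) :
    insert v (Finset.image i' univ) = s ↔ Finset.image i' univ = s.erase v := by
  constructor
  · intro h
    have hsub : s.erase v ⊆ Finset.image i' univ := by
      intro u hu
      obtain ⟨hne, hus⟩ := Finset.mem_erase.mp hu
      rcases Finset.mem_insert.mp (h ▸ hus : u ∈ insert v (Finset.image i' univ)) with h1 | h1
      · exact absurd h1 hne
      · exact h1
    have hcard : (Finset.image i' univ).card ≤ (s.erase v).card := by
      rw [Finset.card_erase_of_mem hv, hs]
      exact le_trans Finset.card_image_le (by simp)
    exact (Finset.eq_of_subset_of_card_le hsub hcard).symm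
  · intro h
    rw [h, Finset.insert_erase hv]

private lemma aux_image_cons (n : ℕ) (v : V) (i' : Fin n → V) :
    Finset.image (Fin.cons v i' : Fin (n+1) → V) univ = insert v (Finset.image i' univ) := by
  ext u; simp [Fin.exists_fin_succ, eq_comm]

private lemma aux_sum_prod_image_eq {R : Type*} [CommRing R] (m : ℕ) (x : V → R) (s : Finset V)
    (hs : s.card = m) :
    ∑ i : Fin m → V, (if Finset.image i univ = s then ∏ j, x (i j) else 0)
      = (m.factorial : R) * ∏ u ∈ s, x u := by
  induction m generalizing s with
  | zero =>
    rw [Finset.card_eq_zero.mp hs]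
    simp
  | succ n ih =>
    rw [aux_sum_cons_split n]
    have key : ∀ v : V, ∑ i' : Fin n → V,
        (if Finset.image (Fin.cons v i' : Fin (n+1) → V) univ = s
          then ∏ j, x ((Fin.cons v i' : Fin (n+1) → V) j) else 0)
        = if v ∈ s then x v * ((n.factorial : R) * ∏ u ∈ s.erase v, x u) else 0 := by
      intro v
      by_cases hv : v ∈ s
      · rw [if_pos hv, ← ih (s.erase v) (by rw [Finset.card_erase_of_mem hv, hs]; rfl),
          Finset.mul_sum]
        refine Finset.sum_congr rfl fun i' _ => ?_
        rw [aux_image_cons, Fin.prod_univ_succ]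
        simp only [Fin.cons_zero, Fin.cons_succ]
        simp only [aux_insert_image_eq_iff v i' s hs hv]
        split <;> simp
      · rw [if_neg hv]
        refine Finset.sum_eq_zero fun i' _ => ?_
        rw [aux_image_cons, if_neg]
        intro h
        exact hv (h ▸ Finset.mem_insert_self v _)
    rw [Finset.sum_congr rfl fun v _ => key v]
    rw [Finset.sum_ite_mem univ s _, Finset.univ_inter]
    have : ∀ v ∈ s, x v * ((n.factorial : R) * ∏ u ∈ s.erase v, x u)
        = (n.factorial : R) * ∏ u ∈ s, x u := by
      intro v hv
      rw [mul_left_comm, Finset.mul_prod_erase s x hv]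
    rw [Finset.sum_congr rfl this, Finset.sum_const, hs]
    push_cast [Nat.factorial_succ]
    ring

private lemma aux_sum_pinned {R : Type*} [CommRing R] (n : ℕ) (x : V → R) (e : Finset V)
    (he : e.card = n + 1) (v : V) :
    (∑ i : Fin (n+1) → V, if i 0 = v ∧ Finset.image i univ = e
      then ∏ j ∈ univ.filter (fun j : Fin (n+1) => j ≠ 0), x (i j) else 0)
    = if v ∈ e then (n.factorial : R) * ∏ u ∈ e.erase v, x u else 0 := by
  rw [aux_sum_cons_split n]
  have himg : ∀ (w : V) (i' : Fin n → V),
      Finset.image (Fin.cons w i' : Fin (n+1) → V) univ = insert w (Finset.image i' univ) :=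
    fun w i' => aux_image_cons n w i'
  have key : ∀ w : V, (∑ i' : Fin n → V, if (Fin.cons w i' : Fin (n+1) → V) 0 = v ∧
        Finset.image (Fin.cons w i' : Fin (n+1) → V) univ = e
      then ∏ j ∈ univ.filter (fun j : Fin (n+1) => j ≠ 0),
        x ((Fin.cons w i' : Fin (n+1) → V) j) else 0)
      = if w = v then (if v ∈ e then (n.factorial : R) * ∏ u ∈ e.erase v, x u else 0) else 0 := by
    intro w
    by_cases hw : w = v
    · subst hw
      rw [if_pos rfl]
      by_cases hv : w ∈ e
      · rw [if_pos hv,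
          ← aux_sum_prod_image_eq n x (e.erase w) (by rw [Finset.card_erase_of_mem hv, he]; rfl)]
        refine Finset.sum_congr rfl fun i' _ => ?_
        rw [aux_prod_filter_ne_zero]
        simp only [Fin.cons_zero, Fin.cons_succ, himg, true_and]
        simp only [aux_insert_image_eq_iff w i' e he hv]
      · rw [if_neg hv]
        refine Finset.sum_eq_zero fun i' _ => ?_
        rw [if_neg]
        rintro ⟨-, h2⟩
        rw [himg] at h2
        exact hv (h2 ▸ Finset.mem_insert_self w _)
    · rw [if_neg hw]
      refine Finset.sum_eq_zero fun i' _ => ?_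
      rw [if_neg]
      rintro ⟨h1, -⟩
      exact hw (by simpa using h1)
  rw [Finset.sum_congr rfl fun w _ => key w, Finset.sum_ite_eq' univ v _,
    if_pos (Finset.mem_univ v)]

private lemma aux_eigenSum {R : Type*} [Field R] [CharZero R] {k : ℕ} [NeZero k]
    (E : Finset (Finset V)) (hE : ∀ e ∈ E, e.card = k) (γ : Finset V → R) (x : V → R) (v : V) :
    (∑ i : Fin k → V, if i 0 = v
      then adjT R k E γ i * ∏ j ∈ univ.filter (fun j : Fin k => j ≠ 0), x (i j) else 0)
    = ∑ e ∈ E.filter (fun e => v ∈ e), γ e * ∏ u ∈ e.erase v, x u := by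
  obtain ⟨n, rfl⟩ : ∃ n, k = n + 1 := ⟨k - 1, (Nat.succ_pred_eq_of_ne_zero (NeZero.ne k)).symm⟩
  have hfac : (n.factorial : R) ≠ 0 := Nat.cast_ne_zero.mpr (Nat.factorial_ne_zero n)
  have step1 : ∀ i : Fin (n+1) → V,
      (if i 0 = v then adjT R (n+1) E γ i
        * ∏ j ∈ univ.filter (fun j : Fin (n+1) => j ≠ 0), x (i j) else 0)
      = ∑ e ∈ E, (if i 0 = v ∧ Finset.image i univ = e
          then (γ e / (n.factorial : R))
            * ∏ j ∈ univ.filter (fun j : Fin (n+1) => j ≠ 0), x (i j) else 0) := by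
    intro i
    by_cases h0 : i 0 = v
    · simp only [h0, true_and, if_pos rfl]
      rw [adjT]
      simp only [Nat.add_sub_cancel]
      by_cases hin : Finset.image i univ ∈ E
      · rw [if_pos hin, Finset.sum_eq_single (Finset.image i univ)]
        · simp
        · intro e he hne
          rw [if_neg (fun h => hne h.symm)]
        · intro h; exact absurd hin h
      · rw [if_neg hin, zero_mul, eq_comm]
        refine Finset.sum_eq_zero fun e he => ?_
        rw [if_neg (fun h : Finset.image i univ = e => hin (h ▸ he))]
    · rw [if_neg h0, eq_comm]
      refine Finset.sum_eq_zero fun e _ => ?_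
      rw [if_neg (fun h => h0 h.1)]
  rw [Finset.sum_congr rfl fun i _ => step1 i, Finset.sum_comm]
  rw [Finset.sum_filter]
  refine Finset.sum_congr rfl fun e he => ?_
  have hmul : ∀ i : Fin (n+1) → V, (if i 0 = v ∧ Finset.image i univ = e
      then (γ e / (n.factorial : R))
        * ∏ j ∈ univ.filter (fun j : Fin (n+1) => j ≠ 0), x (i j) else 0)
      = (γ e / (n.factorial : R)) * (if i 0 = v ∧ Finset.image i univ = e
      then ∏ j ∈ univ.filter (fun j : Fin (n+1) => j ≠ 0), x (i j) else 0) := by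
    intro i; split <;> simp
  rw [Finset.sum_congr rfl fun i _ => hmul i, ← Finset.mul_sum,
    aux_sum_pinned n x e (by simpa using hE e he) v]
  split
  · field_simp
  · simp

/-! ### Edge-sum functionals -/

private noncomputable def PvS (E : Finset (Finset V)) (γ : Finset V → ℝ) (x : V → ℝ) (v : V) :
    ℝ := ∑ e ∈ E.filter (fun e => v ∈ e), γ e * ∏ u ∈ e.erase v, x u

private noncomputable def FF (E : Finset (Finset V)) (x : V → ℝ) : ℝ := ∑ e ∈ E, ∏ u ∈ e, x u

private lemma FF_nonneg (E : Finset (Finset V)) (x : V → ℝ) (hx : ∀ v, 0 ≤ x v) : 0 ≤ FF E x :=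
  Finset.sum_nonneg fun e _ => Finset.prod_nonneg fun u _ => hx u

private lemma PvS_one_nonneg (E : Finset (Finset V)) (x : V → ℝ) (hx : ∀ v, 0 ≤ x v) (v : V) :
    0 ≤ PvS E (fun _ => 1) x v :=
  Finset.sum_nonneg fun e _ => by
    simpa using Finset.prod_nonneg (fun u _ => hx u : ∀ u ∈ e.erase v, 0 ≤ x u)

private lemma FF_smul {k : ℕ} (E : Finset (Finset V)) (hE : ∀ e ∈ E, e.card = k) (c : ℝ)
    (x : V → ℝ) : FF E (fun v => c * x v) = c ^ k * FF E x := by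
  rw [FF, FF, Finset.mul_sum]
  refine Finset.sum_congr rfl fun e he => ?_
  rw [Finset.prod_mul_distrib, Finset.prod_const, hE e he]

private lemma sum_mul_PvS {k : ℕ} (E : Finset (Finset V)) (hE : ∀ e ∈ E, e.card = k)
    (γ : Finset V → ℝ) (x : V → ℝ) :
    ∑ v, x v * PvS E γ x v = (k : ℝ) * ∑ e ∈ E, γ e * ∏ u ∈ e, x u := by
  simp only [PvS, Finset.mul_sum, Finset.sum_filter]
  rw [Finset.sum_comm]
  refine Finset.sum_congr rfl fun e he => ?_
  have : ∀ v : V, (x v * if v ∈ e then γ e * ∏ u ∈ e.erase v, x u else 0)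
      = if v ∈ e then γ e * ∏ u ∈ e, x u else 0 := by
    intro v
    by_cases hv : v ∈ e
    · rw [if_pos hv, if_pos hv, mul_left_comm, Finset.mul_prod_erase e x hv]
    · simp [hv]
  rw [Finset.sum_congr rfl fun v _ => this v, Finset.sum_ite_mem, Finset.univ_inter,
    Finset.sum_const, hE e he, nsmul_eq_mul]

private lemma FF_update (E : Finset (Finset V)) (x : V → ℝ) (v : V) (t : ℝ) :
    FF E (Function.update x v t)
      = t * PvS E (fun _ => 1) x v + ∑ e ∈ E.filter (fun e => v ∉ e), ∏ u ∈ e, x u := by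
  rw [FF, ← Finset.sum_filter_add_sum_filter_not E (fun e => v ∈ e)]
  congr 1
  · rw [PvS, Finset.mul_sum]
    refine Finset.sum_congr rfl fun e he => ?_
    have hv : v ∈ e := (Finset.mem_filter.mp he).2
    have hrest : ∀ u ∈ e.erase v, Function.update x v t u = x u := fun u hu =>
      Function.update_of_ne (Finset.mem_erase.mp hu).1 t x
    rw [← Finset.mul_prod_erase e _ hv, Function.update_self, Finset.prod_congr rfl hrest]
    simp
  · refine Finset.sum_congr rfl fun e he => Finset.prod_congr rfl fun u hu => ?_
    exact Function.update_of_ne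
      (fun h : u = v => absurd (h ▸ hu) (Finset.mem_filter.mp he).2) t x

/-! ### Existence of a maximizer and its properties -/

private lemma exists_max {k : ℕ} (hk : k ≠ 0) [Nonempty V] (E : Finset (Finset V)) :
    ∃ x : V → ℝ, ((∀ v, 0 ≤ x v) ∧ ∑ v, x v ^ k = 1) ∧
      ∀ y : V → ℝ, ((∀ v, 0 ≤ y v) ∧ ∑ v, y v ^ k = 1) → FF E y ≤ FF E x := by
  set Sph : Set (V → ℝ) := {x | (∀ v, 0 ≤ x v) ∧ ∑ v, x v ^ k = 1} with hS
  have hne : Sph.Nonempty := by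
    classical
    obtain ⟨v₀⟩ := ‹Nonempty V›
    refine ⟨fun u => if u = v₀ then 1 else 0, fun v => by positivity, ?_⟩
    rw [Finset.sum_eq_single v₀]
    · simp
    · intro u _ hu; simp [hu, zero_pow hk]
    · simp
  have hclosed : IsClosed Sph := by
    have h1 : IsClosed {x : V → ℝ | ∀ v, 0 ≤ x v} := by
      have : {x : V → ℝ | ∀ v, 0 ≤ x v} = ⋂ v, {x : V → ℝ | 0 ≤ x v} := by
        ext x; simp
      rw [this]
      exact isClosed_iInter fun v => isClosed_le continuous_const (continuous_apply v)
    have h2 : IsClosed {x : V → ℝ | ∑ v, x v ^ k = 1} :=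
      isClosed_eq (by fun_prop) continuous_const
    exact h1.inter h2
  have hsub : Sph ⊆ Set.pi Set.univ (fun _ : V => Set.Icc (0:ℝ) 1) := by
    rintro x ⟨hx0, hx1⟩ v _
    refine ⟨hx0 v, ?_⟩
    by_contra h
    push_neg at h
    have hle : x v ^ k ≤ 1 := by
      rw [← hx1]
      exact Finset.single_le_sum (f := fun u => x u ^ k)
        (fun u _ => pow_nonneg (hx0 u) k) (Finset.mem_univ v)
    have h1 : (1:ℝ) < x v ^ k := one_lt_pow₀ h hk
    linarith
  have hcomp : IsCompact Sph :=
    (isCompact_univ_pi fun _ : V => isCompact_Icc).of_isClosed_subset hclosed hsub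
  have hcont : ContinuousOn (FF E) Sph := Continuous.continuousOn (by
    unfold FF
    exact continuous_finset_sum _ fun e _ => continuous_finset_prod _ fun u _ =>
      continuous_apply u)
  obtain ⟨x, hxS, hxmax⟩ := hcomp.exists_isMaxOn hne hcont
  exact ⟨x, hxS, fun y hy => hxmax hy⟩

private lemma K1 {k : ℕ} (hk : k ≠ 0) (E : Finset (Finset V)) (hE : ∀ e ∈ E, e.card = k)
    (μ : ℝ) (hμ0 : 0 ≤ μ)
    (hmax : ∀ y : V → ℝ, ((∀ v, 0 ≤ y v) ∧ ∑ v, y v ^ k = 1) → FF E y ≤ μ)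
    (y : V → ℝ) (hy : ∀ v, 0 ≤ y v) : FF E y ≤ μ * ∑ v, y v ^ k := by
  set S := ∑ v, y v ^ k with hSdef
  have hS0 : 0 ≤ S := Finset.sum_nonneg fun v _ => pow_nonneg (hy v) k
  rcases eq_or_lt_of_le hS0 with hS | hS
  · have hy0 : ∀ v, y v = 0 := by
      intro v
      have h1 : y v ^ k ≤ S := Finset.single_le_sum (f := fun u => y u ^ k)
        (fun u _ => pow_nonneg (hy u) k) (Finset.mem_univ v)
      have h2 : y v ^ k = 0 := le_antisymm (by linarith [hS.symm]) (pow_nonneg (hy v) k)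
      exact pow_eq_zero_iff hk |>.mp h2
    have : FF E y = 0 := by
      rw [FF]
      refine Finset.sum_eq_zero fun e he => ?_
      have hcard : e.card = k := hE e he
      have hne : e.Nonempty := Finset.card_pos.mp (by rw [hcard]; exact Nat.pos_of_ne_zero hk)
      obtain ⟨u, hu⟩ := hne
      exact Finset.prod_eq_zero hu (hy0 u)
    rw [this, ← hS]
    simp
  · set c : ℝ := (S⁻¹) ^ ((k : ℝ)⁻¹) with hc
    have hc0 : 0 ≤ c := Real.rpow_nonneg (inv_nonneg.mpr hS0) _
    have hck : c ^ k = S⁻¹ := by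
      rw [hc, ← Real.rpow_natCast ((S⁻¹) ^ ((k:ℝ)⁻¹)) k, ← Real.rpow_mul (inv_nonneg.mpr hS0),
        inv_mul_cancel₀ (by exact_mod_cast hk : (k:ℝ) ≠ 0), Real.rpow_one]
    have hmem : (∀ v, 0 ≤ c * y v) ∧ ∑ v, (c * y v) ^ k = 1 := by
      constructor
      · intro v; exact mul_nonneg hc0 (hy v)
      · have : ∀ v, (c * y v) ^ k = c ^ k * y v ^ k := fun v => mul_pow c (y v) k
        rw [Finset.sum_congr rfl fun v _ => this v, ← Finset.mul_sum, hck, ← hSdef,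
          inv_mul_cancel₀ (ne_of_gt hS)]
    have h1 : FF E (fun v => c * y v) ≤ μ := hmax _ hmem
    rw [FF_smul E hE c y, hck] at h1
    have h2 : S⁻¹ * FF E y ≤ μ := h1
    calc FF E y = S * (S⁻¹ * FF E y) := by field_simp
    _ ≤ S * μ := mul_le_mul_of_nonneg_left h2 hS0
    _ = μ * S := mul_comm _ _

private lemma eigen_at_max {k : ℕ} (hk2 : 2 ≤ k) (E : Finset (Finset V))
    (hE : ∀ e ∈ E, e.card = k)
    (x : V → ℝ) (hx0 : ∀ v, 0 ≤ x v) (hx1 : ∑ v, x v ^ k = 1)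
    (hK1 : ∀ y : V → ℝ, (∀ v, 0 ≤ y v) → FF E y ≤ FF E x * ∑ v, y v ^ k) :
    ∀ v, PvS E (fun _ => 1) x v = ((k : ℝ) * FF E x) * x v ^ (k - 1) := by
  intro v
  have hk : k ≠ 0 := by omega
  set μ := FF E x with hμ
  have hμ0 : 0 ≤ μ := FF_nonneg E x hx0
  set P := PvS E (fun _ => 1) x v with hP
  have hP0 : 0 ≤ P := PvS_one_nonneg E x hx0 v
  set C := ∑ e ∈ E.filter (fun e => v ∉ e), ∏ u ∈ e, x u with hC
  set Rr := ∑ u ∈ Finset.univ.erase v, x u ^ k with hR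
  have hsum_update : ∀ t : ℝ, ∑ u, (Function.update x v t) u ^ k = t ^ k + Rr := by
    intro t
    rw [← Finset.add_sum_erase _ _ (Finset.mem_univ v), Function.update_self, hR]
    congr 1
    refine Finset.sum_congr rfl fun u hu => ?_
    rw [Function.update_of_ne (Finset.mem_erase.mp hu).1]
  have hq : ∀ t : ℝ, 0 ≤ t → t * P + C ≤ μ * (t ^ k + Rr) := by
    intro t ht
    have := hK1 (Function.update x v t) (fun u => by
      rcases eq_or_ne u v with rfl | hu
      · rw [Function.update_self]; exact ht
      · rw [Function.update_of_ne hu]; exact hx0 u)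
    rwa [FF_update E x v t, hsum_update t] at this
  have heq : x v * P + C = μ * (x v ^ k + Rr) := by
    have h1 : Function.update x v (x v) = x := Function.update_eq_self v x
    have h2 := FF_update E x v (x v)
    rw [h1] at h2
    have h3 : x v ^ k + Rr = 1 := by
      rw [← hx1, ← hsum_update (x v), h1]
    rw [h3, mul_one, ← h2, hμ]
  rcases eq_or_lt_of_le (hx0 v) with hv | hv
  · rw [← hv, zero_pow (by omega : k - 1 ≠ 0), mul_zero]
    have hq0 : C = μ * Rr := by
      have := heq
      rw [← hv, zero_mul, zero_add, zero_pow hk, zero_add] at this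
      exact this
    have hbound : ∀ t : ℝ, 0 < t → P ≤ μ * t ^ (k - 1) := by
      intro t ht
      have := hq t ht.le
      rw [hq0] at this
      have h2 : t * P ≤ μ * t ^ k := by linarith
      have h3 : t ^ k = t * t ^ (k - 1) := by
        rw [← pow_succ']
        congr 1
        omega
      rw [h3, ← mul_assoc, mul_comm μ t, mul_assoc] at h2
      exact le_of_mul_le_mul_left h2 ht
    by_contra hPne
    have hPpos : 0 < P := lt_of_le_of_ne hP0 (Ne.symm hPne)
    set t := min 1 (P / (2 * (μ + 1))) with htdef
    have ht0 : 0 < t := lt_min one_pos (by positivity)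
    have ht1 : t ≤ 1 := min_le_left _ _
    have htP : t ≤ P / (2 * (μ + 1)) := min_le_right _ _
    have h1 : t ^ (k - 1) ≤ t := by
      calc t ^ (k-1) ≤ t ^ 1 := pow_le_pow_of_le_one ht0.le ht1 (by omega)
      _ = t := pow_one t
    have h2 : P ≤ μ * t ^ (k - 1) := hbound t ht0
    have h3 : μ * t ^ (k-1) ≤ (μ + 1) * t := by
      have := mul_le_mul_of_nonneg_left h1 hμ0
      nlinarith
    have h4 : (μ + 1) * t ≤ (μ + 1) * (P / (2 * (μ + 1))) :=
      mul_le_mul_of_nonneg_left htP (by linarith)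
    have h5 : (μ + 1) * (P / (2 * (μ + 1))) = P / 2 := by
      field_simp
    linarith
  · set q : ℝ → ℝ := fun t => μ * (t ^ k + Rr) - (t * P + C) with hqdef
    have hqmin : IsLocalMin q (x v) := by
      have hmem : Set.Ioi (0:ℝ) ∈ nhds (x v) := Ioi_mem_nhds hv
      refine Filter.eventually_of_mem hmem fun t ht => ?_
      have h1 : q (x v) = 0 := by simp only [hqdef]; linarith [heq]
      have h2 : 0 ≤ q t := by simp only [hqdef]; linarith [hq t (le_of_lt ht)]
      rw [h1]; exact h2
    have hderiv : HasDerivAt q (μ * ((k : ℝ) * x v ^ (k - 1)) - P) (x v) := by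
      have h1 : HasDerivAt (fun t : ℝ => t ^ k) ((k:ℝ) * x v ^ (k-1)) (x v) :=
        hasDerivAt_pow k (x v)
      have h2 : HasDerivAt (fun t : ℝ => t ^ k + Rr) ((k:ℝ) * x v ^ (k-1)) (x v) := h1.add_const Rr
      have h3 : HasDerivAt (fun t : ℝ => μ * (t ^ k + Rr)) (μ * ((k:ℝ) * x v ^ (k-1))) (x v) :=
        h2.const_mul μ
      have h4 : HasDerivAt (fun t : ℝ => t * P + C) P (x v) := by
        simpa using ((hasDerivAt_id (x v)).mul_const P).add_const C
      exact h3.sub h4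
    have hzero := hqmin.deriv_eq_zero
    rw [hderiv.deriv] at hzero
    have : μ * ((k : ℝ) * x v ^ (k - 1)) = P := by linarith
    rw [← this]
    ring

/-! ### Positivity of maximizers via connectivity -/

private lemma crossing_edge (E : Finset (Finset V)) (hconn : HConnectedF E) (x : V → ℝ)
    (hpos : ∃ v, 0 < x v) (hzero : ∃ v, ¬ 0 < x v) :
    ∃ e ∈ E, (∃ a ∈ e, 0 < x a) ∧ (∃ b ∈ e, ¬ 0 < x b) := by
  by_contra hcross
  push_neg at hcross
  set p : V ⊕ {e // e ∈ E} → Prop := Sum.elim (fun v => 0 < x v) (fun e => ∀ u ∈ e.1, 0 < x u)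
    with hp
  have hadj : ∀ {a b}, (hIncGraph E).Adj a b → (p a ↔ p b) := by
    rintro a b (⟨v, e, rfl, rfl, hve⟩ | ⟨v, e, rfl, rfl, hve⟩)
    · simp only [hp, Sum.elim_inl, Sum.elim_inr]
      exact ⟨fun h => hcross e.1 e.2 ⟨v, hve, h⟩, fun h => h v hve⟩
    · simp only [hp, Sum.elim_inl, Sum.elim_inr]
      exact ⟨fun h => h v hve, fun h => hcross e.1 e.2 ⟨v, hve, h⟩⟩
  have hwalk : ∀ {a b}, (hIncGraph E).Walk a b → (p a ↔ p b) := by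
    intro a b w
    induction w with
    | nil => exact Iff.rfl
    | cons h _ ih => exact (hadj h).trans ih
  obtain ⟨v₁, hv₁⟩ := hpos
  obtain ⟨v₀, hv₀⟩ := hzero
  obtain ⟨w⟩ := hconn.preconnected (Sum.inl v₁) (Sum.inl v₀)
  exact hv₀ ((hwalk w).mp hv₁)

private lemma maximizer_pos {k : ℕ} (hk2 : 2 ≤ k) (E : Finset (Finset V))
    (hE : ∀ e ∈ E, e.card = k)
    (hconn : HConnectedF E) (μ : ℝ) (hμ0 : 0 ≤ μ)
    (hK1 : ∀ y : V → ℝ, (∀ v, 0 ≤ y v) → FF E y ≤ μ * ∑ v, y v ^ k)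
    (x : V → ℝ) (hx0 : ∀ v, 0 ≤ x v) (hxpos : 0 < ∑ v, x v ^ k)
    (hFx : FF E x = μ * ∑ v, x v ^ k) : ∀ v, 0 < x v := by
  by_contra hnot
  push_neg at hnot
  obtain ⟨v₀, hv₀⟩ := hnot
  have hvpos : ∃ v, 0 < x v := by
    by_contra hn
    push_neg at hn
    have : ∀ v, x v = 0 := fun v => le_antisymm (hn v) (hx0 v)
    rw [Finset.sum_eq_zero (fun v _ => by rw [this v, zero_pow (by omega : k ≠ 0)])] at hxpos
    exact lt_irrefl _ hxpos
  obtain ⟨e, heE, ⟨a, hae, hapos⟩, ⟨b, hbe, hbz⟩⟩ :=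
    crossing_edge E hconn x hvpos ⟨v₀, not_lt.mpr hv₀⟩
  set n : ℕ := Fintype.card V with hn
  set c : ℝ := ∏ u ∈ e.filter (fun u => 0 < x u), x u with hc
  have hc0 : 0 < c := Finset.prod_pos fun u hu => (Finset.mem_filter.mp hu).2
  set ε : ℝ := min 1 (c / (2 * (μ * n + 1))) with hε
  have hμn : (0:ℝ) ≤ μ * n := mul_nonneg hμ0 (Nat.cast_nonneg n)
  have hε0 : 0 < ε := lt_min one_pos (by positivity)
  have hε1 : ε ≤ 1 := min_le_left _ _
  set y : V → ℝ := fun u => if 0 < x u then x u else ε with hy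
  have hy0 : ∀ u, 0 ≤ y u := fun u => by
    rw [hy]; dsimp only; split
    · exact (hx0 u)
    · exact hε0.le
  have hxy : ∀ u, x u ≤ y u := fun u => by
    rw [hy]; dsimp only; split
    · exact le_refl _
    · exact le_trans (le_of_not_gt (by assumption)) hε0.le
  have hxzero : ∀ u, ¬ 0 < x u → x u = 0 := fun u hu => le_antisymm (not_lt.mp hu) (hx0 u)
  have hFFy : FF E x + ∏ u ∈ e, y u ≤ FF E y := by
    rw [FF, FF, ← Finset.add_sum_erase E _ heE, ← Finset.add_sum_erase E _ heE]
    have h1 : ∏ u ∈ e, x u = 0 := Finset.prod_eq_zero hbe (hxzero b hbz)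
    rw [h1, zero_add]
    have h2 : ∑ e' ∈ E.erase e, ∏ u ∈ e', x u ≤ ∑ e' ∈ E.erase e, ∏ u ∈ e', y u :=
      Finset.sum_le_sum fun e' _ => Finset.prod_le_prod (fun u _ => hx0 u) (fun u _ => hxy u)
    linarith
  have hprod : c * ε ^ (k - 1) ≤ ∏ u ∈ e, y u := by
    rw [← Finset.prod_filter_mul_prod_filter_not e (fun u => 0 < x u)]
    have h1 : ∏ u ∈ e.filter (fun u => 0 < x u), y u = c := by
      rw [hc]
      exact Finset.prod_congr rfl fun u hu => by
        rw [hy]; dsimp only; rw [if_pos (Finset.mem_filter.mp hu).2]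
    have h2 : ∏ u ∈ e.filter (fun u => ¬ 0 < x u), y u
        = ε ^ (e.filter (fun u => ¬ 0 < x u)).card := by
      rw [← Finset.prod_const]
      exact Finset.prod_congr rfl fun u hu => by
        rw [hy]; dsimp only; rw [if_neg (Finset.mem_filter.mp hu).2]
    rw [h1, h2]
    have hm1 : 1 ≤ (e.filter (fun u => ¬ 0 < x u)).card :=
      Finset.card_pos.mpr ⟨b, Finset.mem_filter.mpr ⟨hbe, hbz⟩⟩
    have hmk : (e.filter (fun u => ¬ 0 < x u)).card ≤ k - 1 := by
      have hsub : e.filter (fun u => ¬ 0 < x u) ⊆ e.erase a := by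
        intro u hu
        obtain ⟨hue, hunp⟩ := Finset.mem_filter.mp hu
        exact Finset.mem_erase.mpr ⟨fun h => hunp (h ▸ hapos), hue⟩
      calc (e.filter (fun u => ¬ 0 < x u)).card ≤ (e.erase a).card := Finset.card_le_card hsub
      _ = k - 1 := by rw [Finset.card_erase_of_mem hae, hE e heE]
    have : ε ^ (k - 1) ≤ ε ^ (e.filter (fun u => ¬ 0 < x u)).card :=
      pow_le_pow_of_le_one hε0.le hε1 hmk
    exact mul_le_mul_of_nonneg_left this hc0.le
  have hsumy : ∑ v, y v ^ k ≤ (∑ v, x v ^ k) + n * ε ^ k := by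
    have h1 : ∀ u, y u ^ k ≤ x u ^ k + ε ^ k := by
      intro u
      rw [hy]; dsimp only; split
      · nlinarith [pow_nonneg hε0.le k]
      · rw [hxzero u (by assumption), zero_pow (by omega : k ≠ 0), zero_add]
    calc ∑ v, y v ^ k ≤ ∑ v, (x v ^ k + ε ^ k) := Finset.sum_le_sum fun v _ => h1 v
    _ = (∑ v, x v ^ k) + n * ε ^ k := by
      rw [Finset.sum_add_distrib, Finset.sum_const, Finset.card_univ, nsmul_eq_mul, hn]
  have hup : FF E y ≤ μ * ((∑ v, x v ^ k) + n * ε ^ k) :=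
    le_trans (hK1 y hy0) (mul_le_mul_of_nonneg_left hsumy hμ0)
  have hfin : c * ε ^ (k - 1) ≤ μ * n * ε ^ k := by nlinarith
  have hεk : ε ^ k = ε * ε ^ (k - 1) := by
    rw [← pow_succ']
    congr 1
    omega
  have hεpow : (0:ℝ) < ε ^ (k - 1) := pow_pos hε0 _
  have hce : c ≤ μ * n * ε := by
    rw [hεk] at hfin
    have : c * ε ^ (k-1) ≤ (μ * n * ε) * ε ^ (k-1) := by
      calc c * ε ^ (k-1) ≤ μ * n * (ε * ε ^ (k-1)) := hfin
      _ = (μ * n * ε) * ε ^ (k-1) := by ring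
    exact le_of_mul_le_mul_right this hεpow
  have hεle : ε ≤ c / (2 * (μ * n + 1)) := min_le_right _ _
  have hlast : μ * n * ε ≤ (μ * n + 1) * (c / (2 * (μ * n + 1))) := by
    have h1 : μ * n * ε ≤ (μ * n + 1) * ε := by nlinarith
    have h2 : (μ * n + 1) * ε ≤ (μ * n + 1) * (c / (2 * (μ * n + 1))) :=
      mul_le_mul_of_nonneg_left hεle (by linarith)
    linarith
  have hhalf : (μ * n + 1) * (c / (2 * (μ * n + 1))) = c / 2 := by
    field_simp
  linarith

omit [Fintype V] in
lemma rtg_signs {γ δ : Finset V → ℝ} (h : Relation.ReflTransGen VSwitchStep γ δ) :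
    ∃ s : V → ℝ, (∀ v, s v = 1 ∨ s v = -1) ∧ ∀ e, δ e = γ e * ∏ v ∈ e, s v := by
  induction h with
  | refl => exact ⟨fun _ => 1, fun _ => Or.inl rfl, fun e => by simp⟩
  | tail _ hstep ih =>
    obtain ⟨s, hs1, hs2⟩ := ih
    obtain ⟨w, hw⟩ := hstep
    refine ⟨fun v => s v * (if v = w then -1 else 1), fun v => ?_, fun e => ?_⟩
    · dsimp only; rcases hs1 v with h | h <;> rw [h] <;> split <;> norm_num
    · rw [hw e, hs2 e]
      rw [Finset.prod_mul_distrib]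
      have : ∏ v ∈ e, (if v = w then (-1:ℝ) else 1) = if w ∈ e then -1 else 1 := by
        rw [Finset.prod_ite_eq' e w (fun _ => (-1:ℝ))]
      rw [this]
      split <;> ring
omit [Fintype V] in
lemma signs_rtg (γ : Finset V → ℝ) (W : Finset V) :
    Relation.ReflTransGen VSwitchStep γ
      (fun e => γ e * ∏ v ∈ e, (if v ∈ W then (-1:ℝ) else 1)) := by
  induction W using Finset.induction_on with
  | empty => simpa using Relation.ReflTransGen.refl
  | insert w W hwW ih =>
    refine Relation.ReflTransGen.tail ih ⟨w, fun e => ?_⟩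
    have hsplit : ∏ v ∈ e, (if v ∈ insert w W then (-1:ℝ) else 1)
        = (∏ v ∈ e, (if v ∈ W then (-1:ℝ) else 1)) * (if w ∈ e then -1 else 1) := by
      have : ∀ v ∈ e, (if v ∈ insert w W then (-1:ℝ) else 1)
          = (if v ∈ W then (-1:ℝ) else 1) * (if v = w then -1 else 1) := by
        intro v _
        rcases eq_or_ne v w with rfl | hvw
        · rw [if_pos (Finset.mem_insert_self v W), if_neg hwW, if_pos rfl]; ring
        · rw [if_neg hvw, mul_one]
          congr 1
          simp [Finset.mem_insert, hvw]
      rw [Finset.prod_congr rfl this, Finset.prod_mul_distrib,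
        Finset.prod_ite_eq' e w (fun _ => (-1:ℝ))]
    dsimp only
    rw [hsplit]
    split <;> ring
lemma swequiv_iff (E : Finset (Finset V)) (γ : Finset V → ℝ) (c : ℝ) :
    SignedSwitchEquiv E γ (fun _ => c) ↔
      ∃ s : V → ℝ, (∀ v, s v = 1 ∨ s v = -1) ∧ ∀ e ∈ E, γ e * ∏ v ∈ e, s v = c := by
  constructor
  · rintro ⟨δ, hrtg, hδ⟩
    obtain ⟨s, hs1, hs2⟩ := rtg_signs hrtg
    exact ⟨s, hs1, fun e he => by rw [← hs2 e, hδ e he]⟩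
  · rintro ⟨s, hs1, hs2⟩
    letI : DecidablePred (fun v : V => s v = -1) := Classical.decPred _
    set W := Finset.univ.filter (fun v => s v = -1) with hW
    refine ⟨fun e => γ e * ∏ v ∈ e, (if v ∈ W then (-1:ℝ) else 1), signs_rtg γ W, fun e he => ?_⟩
    have : ∀ v ∈ e, (if v ∈ W then (-1:ℝ) else 1) = s v := by
      intro v _
      rcases hs1 v with h | h
      · rw [if_neg (by simp [hW, h]; norm_num), h]
      · rw [if_pos (by simp [hW, h]), h]
    dsimp only
    rw [Finset.prod_congr rfl this, hs2 e he]


/-! ### The spectral radius equals `k * FF E x₀` for a maximizer `x₀` -/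

private lemma spec_le {k : ℕ} [NeZero k] (E : Finset (Finset V))
    (hE : ∀ e ∈ E, e.card = k) (μ : ℝ)
    (hK1 : ∀ y : V → ℝ, (∀ v, 0 ≤ y v) → FF E y ≤ μ * ∑ v, y v ^ k)
    (lam : ℂ) (z : V → ℂ)
    (hpair : IsTensorEigenpair ℂ k (adjT ℂ k E (fun _ => 1)) lam z) :
    ‖lam‖ ≤ (k : ℝ) * μ := by
  have hk0 : k ≠ 0 := NeZero.ne k
  obtain ⟨hz, heig⟩ := hpair
  set m : V → ℝ := fun v => ‖z v‖ with hm
  have hm0 : ∀ v, 0 ≤ m v := fun v => norm_nonneg _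
  have hzv : ∃ v, z v ≠ 0 := by
    by_contra h
    push_neg at h
    exact hz (funext h)
  obtain ⟨v₁, hv₁⟩ := hzv
  have hSm : 0 < ∑ v, m v ^ k := Finset.sum_pos' (fun v _ => pow_nonneg (hm0 v) k)
    ⟨v₁, Finset.mem_univ v₁, pow_pos (norm_pos_iff.mpr hv₁) k⟩
  have hstep : ∀ v, ‖lam‖ * m v ^ (k-1) ≤ PvS E (fun _ => 1) m v := by
    intro v
    have h1 := heig v
    rw [aux_eigenSum E hE _ z v] at h1
    have h2 : ‖lam‖ * m v ^ (k-1)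
        = ‖∑ e ∈ E.filter (fun e => v ∈ e),
            (1:ℂ) * ∏ u ∈ e.erase v, z u‖ := by
      rw [← norm_pow, ← norm_mul, ← h1]
    rw [h2, PvS]
    refine le_trans (norm_sum_le _ _) (le_of_eq (Finset.sum_congr rfl fun e he => ?_))
    simp only [one_mul, norm_prod]
    rfl
  have e1 : ‖lam‖ * ∑ v, m v ^ k = ∑ v, m v * (‖lam‖ * m v ^ (k-1)) := by
    rw [Finset.mul_sum]
    refine Finset.sum_congr rfl fun v _ => ?_
    have hpow : m v * m v ^ (k-1) = m v ^ k := by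
      rw [← pow_succ']
      congr 1
      omega
    rw [← hpow]
    ring
  have e2 : ∑ v, m v * (‖lam‖ * m v ^ (k-1)) ≤ ∑ v, m v * PvS E (fun _ => 1) m v :=
    Finset.sum_le_sum fun v _ => mul_le_mul_of_nonneg_left (hstep v) (hm0 v)
  have e3 : ∑ v, m v * PvS E (fun _ => 1) m v = (k:ℝ) * FF E m := by
    rw [sum_mul_PvS E hE _ m]
    congr 1
    rw [FF]
    exact Finset.sum_congr rfl fun e _ => one_mul _
  have e4 : (k:ℝ) * FF E m ≤ (k:ℝ) * (μ * ∑ v, m v ^ k) :=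
    mul_le_mul_of_nonneg_left (hK1 m hm0) (Nat.cast_nonneg k)
  have hchain : ‖lam‖ * ∑ v, m v ^ k ≤ ((k:ℝ) * μ) * ∑ v, m v ^ k := by
    rw [e1]
    calc ∑ v, m v * (‖lam‖ * m v ^ (k-1))
        ≤ ∑ v, m v * PvS E (fun _ => 1) m v := e2
    _ = (k:ℝ) * FF E m := e3
    _ ≤ (k:ℝ) * (μ * ∑ v, m v ^ k) := e4
    _ = ((k:ℝ) * μ) * ∑ v, m v ^ k := by ring
  exact le_of_mul_le_mul_right hchain hSm

private lemma adjT_coe (k : ℕ) (E : Finset (Finset V)) :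
    (fun i : Fin k → V => ((adjT ℝ k E (fun _ => 1) i : ℝ) : ℂ))
      = adjT ℂ k E (fun _ => 1) := by
  funext i
  rw [adjT, adjT, apply_ite (fun r : ℝ => (r : ℂ))]
  push_cast
  rfl

private lemma spec_eq {k : ℕ} [NeZero k] (E : Finset (Finset V))
    (hE : ∀ e ∈ E, e.card = k) (x₀ : V → ℝ) (hx₀0 : ∀ v, 0 ≤ x₀ v) (hx₀1 : ∑ v, x₀ v ^ k = 1)
    (heig : ∀ v, PvS E (fun _ => 1) x₀ v = ((k:ℝ) * FF E x₀) * x₀ v ^ (k-1))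
    (hK1 : ∀ y : V → ℝ, (∀ v, 0 ≤ y v) → FF E y ≤ FF E x₀ * ∑ v, y v ^ k) :
    tSpecRad k (adjT ℝ k E (fun _ => 1)) = (k:ℝ) * FF E x₀ := by
  set μ := FF E x₀ with hμdef
  have hμ0 : 0 ≤ μ := FF_nonneg _ _ hx₀0
  have hkμ0 : 0 ≤ (k:ℝ) * μ := mul_nonneg (Nat.cast_nonneg k) hμ0
  set z : V → ℂ := fun v => (x₀ v : ℂ) with hzdef
  have hcpair : IsTensorEigenpair ℂ k (adjT ℂ k E (fun _ => 1))
      ((((k:ℝ) * μ : ℝ)) : ℂ) z := by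
    constructor
    · intro h
      have h1 : ∀ v, x₀ v = 0 := fun v => by
        have h2 := congrFun h v
        rw [hzdef] at h2
        simpa using h2
      rw [Finset.sum_eq_zero (fun v _ => by rw [h1 v, zero_pow (NeZero.ne k)])] at hx₀1
      norm_num at hx₀1
    · intro v
      rw [aux_eigenSum E hE (fun _ => (1:ℂ)) z v]
      simp only [one_mul]
      have hreal : PvS E (fun _ => 1) x₀ v = ((k:ℝ)*μ) * x₀ v ^ (k-1) := heig v
      rw [PvS] at hreal
      simp only [one_mul] at hreal
      calc ∑ e ∈ E.filter (fun e => v ∈ e), ∏ u ∈ e.erase v, z u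
          = ((∑ e ∈ E.filter (fun e => v ∈ e), ∏ u ∈ e.erase v, x₀ u : ℝ) : ℂ) := by
            rw [hzdef]; push_cast; rfl
      _ = ((((k:ℝ)*μ) * x₀ v ^ (k-1) : ℝ) : ℂ) := by rw [hreal]
      _ = (↑(↑k * μ) : ℂ) * z v ^ (k-1) := by rw [hzdef]; push_cast; ring
  have hbdd : ∀ r ∈ {r | ∃ lam : ℂ, (∃ z : V → ℂ,
      IsTensorEigenpair ℂ k (fun i => ((adjT ℝ k E (fun _ => 1) i : ℝ) : ℂ)) lam z) ∧
      r = ‖lam‖}, r ≤ (k:ℝ) * μ := by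
    rintro r ⟨lam, ⟨z, hpair⟩, rfl⟩
    rw [adjT_coe] at hpair
    exact spec_le E hE μ (by rw [hμdef] at *; exact hK1) lam z hpair
  have hmem : ((k:ℝ) * μ) ∈ {r | ∃ lam : ℂ, (∃ z : V → ℂ,
      IsTensorEigenpair ℂ k (fun i => ((adjT ℝ k E (fun _ => 1) i : ℝ) : ℂ)) lam z) ∧
      r = ‖lam‖} := by
    refine ⟨(((k:ℝ) * μ : ℝ) : ℂ), ⟨fun v => (x₀ v : ℂ), ?_⟩, ?_⟩
    · rw [adjT_coe]
      exact hcpair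
    · rw [Complex.norm_real, Real.norm_eq_abs, abs_of_nonneg hkμ0]
  rw [tSpecRad]
  exact le_antisymm (Real.sSup_le hbdd hkμ0) (le_csSup ⟨(k:ℝ) * μ, hbdd⟩ hmem)

end AuxiliaryLemmas


/-- for a connected `k`-uniform oriented hypergraph `G^σ` with `k` even, the
induced signed hypergraph `ΓG^σ` is switching equivalent to `ΓG⁺` iff `-ρ(A(G))` is an
H-eigenvalue of `A(ΓG^σ)`.  (Here `ΓG⁺` has all edge signs `(-1)^{k-1} = -1`.) -/
theorem induced_switchEquiv_plus_iff_H_eigenvalue [Fintype V] [DecidableEq V]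
    (k : ℕ) [NeZero k] (hk : Even k) (E : Finset (Finset V)) (hE : ∀ e ∈ E, e.card = k)
    (hconn : HConnectedF E) (σ : Finset V → V → ℝ) (hσ : IsIncidenceOrientation E σ) :
    SignedSwitchEquiv E (inducedSign k σ) (fun _ => (-1 : ℝ) ^ (k - 1)) ↔
      ∃ x : V → ℝ, IsTensorEigenpair ℝ k (adjT ℝ k E (inducedSign k σ))
        (-(tSpecRad k (adjT ℝ k E fun _ => 1))) x := by
  classical
  have hk0 : k ≠ 0 := NeZero.ne k
  have hk2 : 2 ≤ k := by
    rcases hk with ⟨m, rfl⟩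
    omega
  have hodd : Odd (k - 1) := Nat.Even.sub_odd (by omega) hk odd_one
  have hneg1 : ((-1:ℝ)) ^ (k-1) = -1 := Odd.neg_one_pow hodd
  set γ := inducedSign k σ with hγ
  have habs : ∀ e ∈ E, |γ e| = 1 := by
    intro e he
    show |(-1:ℝ) ^ (k-1) * ∏ v ∈ e, σ e v| = 1
    rw [abs_mul, abs_pow, abs_neg, abs_one, one_pow, one_mul, Finset.abs_prod]
    rw [Finset.prod_congr rfl (fun v hv => ?_), Finset.prod_const_one]
    rcases hσ e he v hv with h | h <;> rw [h] <;> norm_num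
  haveI hV : Nonempty V := by
    obtain ⟨w⟩ := hconn.nonempty
    rcases w with v | e
    · exact ⟨v⟩
    · obtain ⟨v, hv⟩ := Finset.card_pos.mp (by rw [hE e.1 e.2]; omega : 0 < e.1.card)
      exact ⟨v⟩
  obtain ⟨x₀, ⟨hx₀0, hx₀1⟩, hx₀max⟩ := exists_max hk0 E
  set μ := FF E x₀ with hμdef
  have hμ0 : 0 ≤ μ := FF_nonneg E x₀ hx₀0
  have hK1' : ∀ y : V → ℝ, (∀ v, 0 ≤ y v) → FF E y ≤ μ * ∑ v, y v ^ k :=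
    K1 hk0 E hE μ hμ0 (fun y hy => hx₀max y hy)
  have heig0 : ∀ v, PvS E (fun _ => 1) x₀ v = ((k:ℝ) * μ) * x₀ v ^ (k-1) :=
    eigen_at_max hk2 E hE x₀ hx₀0 hx₀1 hK1'
  have hspec : tSpecRad k (adjT ℝ k E (fun _ => 1)) = (k:ℝ) * μ :=
    spec_eq E hE x₀ hx₀0 hx₀1 heig0 hK1'
  set lam := (k:ℝ) * μ with hlamdef
  have hlam0 : 0 ≤ lam := mul_nonneg (Nat.cast_nonneg k) hμ0
  constructor
  · -- switching equivalence implies eigenpair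
    intro hsw
    obtain ⟨s, hs1, hs2⟩ := (swequiv_iff E γ _).mp hsw
    have hsne : ∀ v, s v ≠ 0 := fun v => by rcases hs1 v with h | h <;> rw [h] <;> norm_num
    have hssq : ∀ v, s v * s v = 1 := fun v => by rcases hs1 v with h | h <;> rw [h] <;> norm_num
    have hspow : ∀ v, s v ^ (k-1) = s v := fun v => by
      rcases hs1 v with h | h <;> rw [h]
      · exact one_pow _
      · exact Odd.neg_one_pow hodd
    set y : V → ℝ := fun v => s v * x₀ v with hydef
    refine ⟨y, ?_, ?_⟩
    · intro h
      have h1 : ∀ v, x₀ v = 0 := fun v => by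
        have h2 := congrFun h v
        rcases mul_eq_zero.mp h2 with h3 | h3
        · exact absurd h3 (hsne v)
        · exact h3
      rw [Finset.sum_eq_zero (fun v _ => by rw [h1 v, zero_pow hk0])] at hx₀1
      norm_num at hx₀1
    · intro v
      rw [aux_eigenSum E hE γ y v, hspec]
      have hterm : ∀ e ∈ E.filter (fun e => v ∈ e),
          γ e * ∏ u ∈ e.erase v, y u
          = (-(s v)) * ((fun _ => (1:ℝ)) e * ∏ u ∈ e.erase v, x₀ u) := by
        intro e he
        obtain ⟨heE, hv⟩ := Finset.mem_filter.mp he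
        have hyprod : ∏ u ∈ e.erase v, y u
            = (∏ u ∈ e.erase v, s u) * ∏ u ∈ e.erase v, x₀ u := by
          rw [← Finset.prod_mul_distrib]
        have hprs : ∏ u ∈ e.erase v, s u = s v * ∏ u ∈ e, s u := by
          have h1 : s v * ∏ u ∈ e.erase v, s u = ∏ u ∈ e, s u := Finset.mul_prod_erase e s hv
          calc ∏ u ∈ e.erase v, s u
              = (s v * s v) * ∏ u ∈ e.erase v, s u := by rw [hssq v]; ring
          _ = s v * (s v * ∏ u ∈ e.erase v, s u) := by ring
          _ = s v * ∏ u ∈ e, s u := by rw [h1]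
        rw [hyprod, hprs]
        have h2 := hs2 e heE
        calc γ e * ((s v * ∏ u ∈ e, s u) * ∏ u ∈ e.erase v, x₀ u)
            = (γ e * ∏ u ∈ e, s u) * s v * ∏ u ∈ e.erase v, x₀ u := by ring
        _ = ((-1:ℝ)^(k-1)) * s v * ∏ u ∈ e.erase v, x₀ u := by rw [h2]
        _ = (-(s v)) * ((fun _ => (1:ℝ)) e * ∏ u ∈ e.erase v, x₀ u) := by rw [hneg1]; ring
      rw [Finset.sum_congr rfl hterm, ← Finset.mul_sum]
      have h3 : ∑ e ∈ E.filter (fun e => v ∈ e), (fun _ => (1:ℝ)) e * ∏ u ∈ e.erase v, x₀ u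
          = PvS E (fun _ => 1) x₀ v := rfl
      rw [h3, heig0 v]
      have hy : y v = s v * x₀ v := rfl
      rw [hy, mul_pow, hspow v]
      ring
  · -- eigenpair implies switching equivalence
    rintro ⟨x, hxne, hxeig⟩
    rcases Finset.eq_empty_or_nonempty E with hEe | hEne
    · exact ⟨γ, Relation.ReflTransGen.refl, fun e he => by rw [hEe] at he; simp at he⟩
    have hcardE : (1:ℝ) ≤ E.card := by exact_mod_cast Finset.card_pos.mpr hEne
    have hμpos : 0 < μ := by
      have h1 := hK1' (fun _ => 1) (fun _ => zero_le_one)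
      have h2 : FF E (fun _ => (1:ℝ)) = E.card := by rw [FF]; simp
      have h3 : ∑ _v : V, (1:ℝ) ^ k = Fintype.card V := by simp
      rw [h2, h3] at h1
      by_contra hcon
      push_neg at hcon
      have h4 : μ * (Fintype.card V : ℝ) ≤ 0 :=
        mul_nonpos_of_nonpos_of_nonneg hcon (Nat.cast_nonneg _)
      linarith
    have hlampos : 0 < lam := by
      rw [hlamdef]
      have : (0:ℝ) < k := by exact_mod_cast Nat.pos_of_ne_zero hk0
      positivity
    have heigx : ∀ v, PvS E γ x v = (-lam) * x v ^ (k-1) := by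
      intro v
      have h1 := hxeig v
      rw [aux_eigenSum E hE γ x v, hspec] at h1
      exact h1
    set m : V → ℝ := fun v => |x v| with hm
    have hm0 : ∀ v, 0 ≤ m v := fun v => abs_nonneg _
    have hSm : 0 < ∑ v, m v ^ k := by
      obtain ⟨v₁, hv₁⟩ := Function.ne_iff.mp hxne
      exact Finset.sum_pos' (fun v _ => pow_nonneg (hm0 v) k)
        ⟨v₁, Finset.mem_univ v₁, pow_pos (abs_pos.mpr hv₁) k⟩
    have hptabs : ∀ v, ∀ e ∈ E.filter (fun e' => v ∈ e'),
        |γ e * ∏ u ∈ e.erase v, x u| = (fun _ => (1:ℝ)) e * ∏ u ∈ e.erase v, m u := by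
      intro v e he
      rw [abs_mul, habs e (Finset.mem_filter.mp he).1, one_mul, Finset.abs_prod]
      exact (one_mul _).symm
    have habs_le : ∀ v, lam * m v ^ (k-1) ≤ PvS E (fun _ => 1) m v := by
      intro v
      have h1 : |PvS E γ x v| = lam * m v ^ (k-1) := by
        rw [heigx v, abs_mul, abs_neg, abs_of_nonneg hlam0, abs_pow]
      rw [← h1, PvS, PvS]
      exact le_trans (Finset.abs_sum_le_sum_abs _ _)
        (le_of_eq (Finset.sum_congr rfl (hptabs v)))
    -- summed (in)equalities force equality everywhere
    have hfg : ∀ v, m v * (lam * m v ^ (k-1)) ≤ m v * PvS E (fun _ => 1) m v :=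
      fun v => mul_le_mul_of_nonneg_left (habs_le v) (hm0 v)
    have hsumf : ∑ v, m v * (lam * m v ^ (k-1)) = lam * ∑ v, m v ^ k := by
      rw [Finset.mul_sum]
      refine Finset.sum_congr rfl fun v _ => ?_
      have hpow : m v * m v ^ (k-1) = m v ^ k := by
        rw [← pow_succ']
        congr 1
        omega
      rw [← hpow]
      ring
    have hsumg : ∑ v, m v * PvS E (fun _ => 1) m v = (k:ℝ) * FF E m := by
      rw [sum_mul_PvS E hE _ m]
      congr 1
      rw [FF]
      exact Finset.sum_congr rfl fun e _ => one_mul _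
    have hgle : (k:ℝ) * FF E m ≤ lam * ∑ v, m v ^ k := by
      rw [hlamdef]
      calc (k:ℝ) * FF E m ≤ (k:ℝ) * (μ * ∑ v, m v ^ k) :=
        mul_le_mul_of_nonneg_left (hK1' m hm0) (Nat.cast_nonneg k)
      _ = (k:ℝ) * μ * ∑ v, m v ^ k := by ring
    have hsum_eq : ∑ v, m v * PvS E (fun _ => 1) m v = ∑ v, m v * (lam * m v ^ (k-1)) := by
      have hle1 : ∑ v, m v * (lam * m v ^ (k-1)) ≤ ∑ v, m v * PvS E (fun _ => 1) m v :=
        Finset.sum_le_sum fun v _ => hfg v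
      have hle2 : ∑ v, m v * PvS E (fun _ => 1) m v ≤ ∑ v, m v * (lam * m v ^ (k-1)) := by
        rw [hsumg, hsumf]
        exact hgle
      exact le_antisymm hle2 hle1
    have hpt_eq : ∀ v, m v * PvS E (fun _ => 1) m v = m v * (lam * m v ^ (k-1)) := by
      have hzero : ∑ v, (m v * PvS E (fun _ => 1) m v - m v * (lam * m v ^ (k-1))) = 0 := by
        rw [Finset.sum_sub_distrib, hsum_eq, sub_self]
      intro v
      have := (Finset.sum_eq_zero_iff_of_nonneg
        (fun v _ => sub_nonneg.mpr (hfg v))).mp hzero v (Finset.mem_univ v)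
      linarith
    have hFFm : FF E m = μ * ∑ v, m v ^ k := by
      have h1 : (k:ℝ) * FF E m = lam * ∑ v, m v ^ k := by
        rw [← hsumg, hsum_eq, hsumf]
      rw [hlamdef] at h1
      have hkne : (k:ℝ) ≠ 0 := by exact_mod_cast hk0
      have h2 : (k:ℝ) * FF E m = (k:ℝ) * (μ * ∑ v, m v ^ k) := by rw [h1]; ring
      exact mul_left_cancel₀ hkne h2
    have hposm : ∀ v, 0 < m v := maximizer_pos hk2 E hE hconn μ hμ0 hK1' m hm0 hSm hFFm
    have hxne0 : ∀ v, x v ≠ 0 := fun v => abs_pos.mp (hposm v)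
    have hpvm : ∀ v, PvS E (fun _ => 1) m v = lam * m v ^ (k-1) := fun v =>
      mul_left_cancel₀ (ne_of_gt (hposm v)) (hpt_eq v)
    set s : V → ℝ := fun v => if 0 < x v then 1 else -1 with hs
    have hs1 : ∀ v, s v = 1 ∨ s v = -1 := fun v => by
      rw [hs]; dsimp only; split
      · exact Or.inl rfl
      · exact Or.inr rfl
    have hssq : ∀ v, s v * s v = 1 := fun v => by rcases hs1 v with h | h <;> rw [h] <;> norm_num
    have hxsm : ∀ v, x v = s v * m v := by
      intro v
      rw [hs]; dsimp only
      rcases lt_or_gt_of_ne (hxne0 v) with hneg | hpos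
      · rw [if_neg (by linarith), show m v = -(x v) from abs_of_neg hneg]
        ring
      · rw [if_pos hpos, show m v = x v from abs_of_pos hpos]
        ring
    have claim : ∀ e ∈ E, γ e * ∏ u ∈ e, s u = -1 := by
      intro e heE
      obtain ⟨v, hv⟩ : e.Nonempty :=
        Finset.card_pos.mp (by rw [hE e heE]; omega : 0 < e.card)
      have heT : e ∈ E.filter (fun e' => v ∈ e') := Finset.mem_filter.mpr ⟨heE, hv⟩
      have htot : ∑ e' ∈ E.filter (fun e' => v ∈ e'), γ e' * ∏ u ∈ e'.erase v, x u
          = (-lam) * x v ^ (k-1) := heigx v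
      have habs_eq : ∑ e' ∈ E.filter (fun e' => v ∈ e'), |γ e' * ∏ u ∈ e'.erase v, x u|
          = lam * m v ^ (k-1) := by
        rw [Finset.sum_congr rfl (hptabs v)]
        exact hpvm v
      have hce : γ e * ∏ u ∈ e.erase v, x u = (-(s v)) * |γ e * ∏ u ∈ e.erase v, x u| := by
        rcases lt_or_gt_of_ne (hxne0 v) with hneg | hpos
        · -- x v < 0 : s v = -1, each term equals its absolute value
          have hsv : s v = -1 := by rw [hs]; dsimp only; rw [if_neg (by linarith)]
          have hkey : ∑ e' ∈ E.filter (fun e' => v ∈ e'),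
              (|γ e' * ∏ u ∈ e'.erase v, x u| - γ e' * ∏ u ∈ e'.erase v, x u) = 0 := by
            rw [Finset.sum_sub_distrib, habs_eq, htot]
            have hmv : m v = -(x v) := abs_of_neg hneg
            have hmp : m v ^ (k-1) = -(x v ^ (k-1)) := by
              rw [hmv, Odd.neg_pow hodd]
            rw [hmp]
            ring
          have := (Finset.sum_eq_zero_iff_of_nonneg
            (fun e' _ => sub_nonneg.mpr (le_abs_self _))).mp hkey e heT
          rw [hsv]
          linarith
        · -- 0 < x v : s v = 1, each term equals the negative of its absolute value
          have hsv : s v = 1 := by rw [hs]; dsimp only; rw [if_pos hpos]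
          have hkey : ∑ e' ∈ E.filter (fun e' => v ∈ e'),
              (|γ e' * ∏ u ∈ e'.erase v, x u| + γ e' * ∏ u ∈ e'.erase v, x u) = 0 := by
            rw [Finset.sum_add_distrib, habs_eq, htot]
            have hmv : m v = x v := abs_of_pos hpos
            rw [hmv]
            ring
          have := (Finset.sum_eq_zero_iff_of_nonneg
            (fun e' _ => by linarith [neg_abs_le (γ e' * ∏ u ∈ e'.erase v, x u)])).mp
            hkey e heT
          rw [hsv]
          linarith
      have habse : |γ e * ∏ u ∈ e.erase v, x u| = ∏ u ∈ e.erase v, m u := by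
        have := hptabs v e heT
        rw [this]
        exact one_mul _
      have hprodx : ∏ u ∈ e.erase v, x u
          = (∏ u ∈ e.erase v, s u) * ∏ u ∈ e.erase v, m u := by
        rw [← Finset.prod_mul_distrib]
        exact Finset.prod_congr rfl fun u _ => hxsm u
      have hmpos : 0 < ∏ u ∈ e.erase v, m u :=
        Finset.prod_pos fun u _ => hposm u
      have hγs : γ e * ∏ u ∈ e.erase v, s u = -(s v) := by
        have h1 : (γ e * ∏ u ∈ e.erase v, s u) * ∏ u ∈ e.erase v, m u
            = (-(s v)) * ∏ u ∈ e.erase v, m u := by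
          calc (γ e * ∏ u ∈ e.erase v, s u) * ∏ u ∈ e.erase v, m u
              = γ e * ((∏ u ∈ e.erase v, s u) * ∏ u ∈ e.erase v, m u) := by ring
          _ = γ e * ∏ u ∈ e.erase v, x u := by rw [← hprodx]
          _ = (-(s v)) * |γ e * ∏ u ∈ e.erase v, x u| := hce
          _ = (-(s v)) * ∏ u ∈ e.erase v, m u := by rw [habse]
        exact mul_right_cancel₀ (ne_of_gt hmpos) h1
      have hprods : ∏ u ∈ e, s u = s v * ∏ u ∈ e.erase v, s u :=
        (Finset.mul_prod_erase e s hv).symm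
      calc γ e * ∏ u ∈ e, s u = s v * (γ e * ∏ u ∈ e.erase v, s u) := by rw [hprods]; ring
      _ = s v * (-(s v)) := by rw [hγs]
      _ = -(s v * s v) := by ring
      _ = -1 := by rw [hssq v]
    exact (swequiv_iff E γ _).mpr ⟨s, hs1, fun e he => by rw [hneg1]; exact claim e he⟩
end
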